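/- arXiv:2106.10735 — 5 statements merged into one kernel-verified Lean document; each statement's English description precedes it below -/
import Mathlib

section
/- For γ ∈ [0,1), the equation (3+γ)(1-x)·log(1/(1-x)) = 2x has a unique root R_γ in the open interval (0,1). -/
open Real Set

/-- The equation `(3+γ)(1-x) log(1/(1-x)) = 2x` has a unique root in `(0,1)`. -/
theorem root_R_gamma_exists_unique (γ : ℝ) (hγ0 : 0 ≤ γ) (hγ1 : γ < 1) :
    ∃! x : ℝ, x ∈ Set.Ioo (0 : ℝ) 1 ∧
      (3 + γ) * (1 - x) * Real.log (1 / (1 - x)) = 2 * x := by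
  set h : ℝ → ℝ := fun x => -(3 + γ) * Real.log (1 - x) - 2 * (1 - x)⁻¹ + 2 with hh
  set c : ℝ := (1 + γ) / (3 + γ) with hc
  have h3 : (0:ℝ) < 3 + γ := by linarith
  have hc0 : 0 < c := by positivity
  have hc1 : c < 1/2 := by rw [hc, div_lt_iff₀ h3]; nlinarith
  -- equivalence between the original equation and `h x = 0` on (0,1)
  have hequiv : ∀ x ∈ Ioo (0:ℝ) 1,
      ((3 + γ) * (1 - x) * Real.log (1 / (1 - x)) = 2 * x ↔ h x = 0) := by
    intro x hx
    have hx1 : (0:ℝ) < 1 - x := by linarith [hx.2]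
    have hne : (1:ℝ) - x ≠ 0 := ne_of_gt hx1
    have key : h x * (1 - x)
        = (3 + γ) * (1 - x) * Real.log (1 / (1 - x)) - 2 * x := by
      rw [one_div, Real.log_inv, hh]
      field_simp
      ring
    constructor
    · intro e
      have : h x * (1 - x) = 0 := by rw [key, e]; ring
      rcases mul_eq_zero.mp this with h' | h'
      · exact h'
      · exact absurd h' hne
    · intro e
      have := key
      rw [e] at this
      linarith [this]
  -- derivative of h for x < 1
  have hderiv : ∀ x ∈ Iio (1:ℝ),
      HasDerivAt h ((3 + γ) / (1 - x) - 2 / (1 - x) ^ 2) x := by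
    intro x hx
    have hne : (1:ℝ) - x ≠ 0 := sub_ne_zero.mpr (mem_Iio.mp hx).ne'
    have h1 : HasDerivAt (fun y : ℝ => 1 - y) (-1) x := (hasDerivAt_id x).const_sub 1
    have hlog : HasDerivAt (fun y : ℝ => Real.log (1 - y)) ((1 - x)⁻¹ * (-1)) x :=
      (Real.hasDerivAt_log hne).comp x h1
    have hinv : HasDerivAt (fun y : ℝ => (1 - y)⁻¹) (-(-1) / (1 - x) ^ 2) x := h1.inv hne
    have H := ((hlog.const_mul (-(3 + γ))).sub (hinv.const_mul 2)).add_const 2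
    exact H.congr_deriv (by ring)
  have hcont : ContinuousOn h (Iio (1:ℝ)) := fun x hx =>
    (hderiv x hx).continuousAt.continuousWithinAt
  -- strictly monotone on [0,c]
  have hmono : StrictMonoOn h (Icc 0 c) := by
    apply strictMonoOn_of_deriv_pos (convex_Icc 0 c)
      (hcont.mono (fun y hy => lt_of_le_of_lt hy.2 (by linarith)))
    intro x hx
    rw [interior_Icc] at hx
    have hx1 : (0:ℝ) < 1 - x := by linarith [hx.2]
    rw [(hderiv x (by simp only [mem_Iio]; linarith [hx.2])).deriv]
    have hnum : 0 < (3 + γ) * (1 - x) - 2 := by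
      have := hx.2
      rw [hc, lt_div_iff₀ h3] at this
      nlinarith
    have heq : (3 + γ) / (1 - x) - 2 / (1 - x) ^ 2
        = ((3 + γ) * (1 - x) - 2) / (1 - x) ^ 2 := by
      field_simp
    rw [heq]
    exact div_pos hnum (pow_pos hx1 2)
  -- strictly antitone on [c,1)
  have hanti : StrictAntiOn h (Ico c 1) := by
    apply strictAntiOn_of_deriv_neg (convex_Ico c 1)
      (hcont.mono (fun y hy => hy.2))
    intro x hx
    rw [interior_Ico] at hx
    have hx1 : (0:ℝ) < 1 - x := by linarith [hx.2]
    rw [(hderiv x hx.2).deriv]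
    have hnum : (3 + γ) * (1 - x) - 2 < 0 := by
      have := hx.1
      rw [hc, div_lt_iff₀ h3] at this
      nlinarith
    have heq : (3 + γ) / (1 - x) - 2 / (1 - x) ^ 2
        = ((3 + γ) * (1 - x) - 2) / (1 - x) ^ 2 := by
      field_simp
    rw [heq]
    exact div_neg_of_neg_of_pos hnum (pow_pos hx1 2)
  have h0 : h 0 = 0 := by simp [hh]
  have hcpos : 0 < h c := by
    have := hmono ⟨le_rfl, hc0.le⟩ ⟨hc0.le, le_rfl⟩ hc0
    rw [h0] at this
    exact this
  -- h (99/100) < 0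
  have hlog10 : Real.log 10 < 9 := by
    have := Real.log_lt_sub_one_of_pos (by norm_num : (0:ℝ) < 10) (by norm_num)
    linarith
  have hlog100 : Real.log 100 < 18 := by
    have : Real.log 100 = 2 * Real.log 10 := by
      rw [show (100:ℝ) = 10 ^ 2 by norm_num, Real.log_pow]
      push_cast; ring
    rw [this]; linarith
  have hlog100pos : 0 < Real.log 100 := Real.log_pos (by norm_num)
  have hb : h (99/100) < 0 := by
    have hval : Real.log (1 - 99/100) = - Real.log 100 := by
      rw [show (1:ℝ) - 99/100 = (100:ℝ)⁻¹ by norm_num, Real.log_inv]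
    rw [hh]
    simp only
    rw [hval]
    have : (1:ℝ) - 99/100 = 1/100 := by norm_num
    rw [this]
    norm_num
    nlinarith
  -- IVT on [c, 99/100]
  have hcb : c ≤ 99/100 := by linarith
  have hivt := intermediate_value_Icc' hcb
    (hcont.mono (fun y hy => lt_of_le_of_lt hy.2 (by norm_num)))
  have h0mem : (0:ℝ) ∈ Icc (h (99/100)) (h c) := ⟨hb.le, hcpos.le⟩
  obtain ⟨x, hxmem, hx0⟩ := hivt h0mem
  have hcx : c < x := lt_of_le_of_ne hxmem.1 (by rintro rfl; rw [hx0] at hcpos; linarith)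
  have hxIoo : x ∈ Ioo (0:ℝ) 1 := ⟨by linarith [hxmem.1], by linarith [hxmem.2]⟩
  refine ⟨x, ⟨hxIoo, (hequiv x hxIoo).mpr hx0⟩, ?_⟩
  rintro y ⟨hyIoo, hye⟩
  have hy0 : h y = 0 := (hequiv y hyIoo).mp hye
  have hcy : c < y := by
    by_contra hcy
    push_neg at hcy
    have := hmono ⟨le_rfl, hc0.le⟩ ⟨hyIoo.1.le, hcy⟩ hyIoo.1
    rw [h0, hy0] at this
    linarith
  exact hanti.injOn ⟨hcy.le, hyIoo.2⟩ ⟨hcx.le, hxIoo.2⟩ (hy0.trans hx0.symm)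
end

section
/- Fix γ ∈ [0,1), and let R_γ ∈ (0,1) be the root of (3+γ)(1-x)log(1/(1-x)) = 2x. For any r ∈ (0, R_γ] and for all a ∈ [0,1], (a/r)log(1/(1-r)) + ((1-a²)/(1+γ))·(1/(1-r) - (1/r)log(1/(1-r))) ≤ (1/r)log(1/(1-r)). -/
open Set

private lemma hasDerivAt_h {x : ℝ} (hx : x < 1) :
    HasDerivAt (fun x : ℝ => (1 - x) * (-Real.log (1 - x))) (Real.log (1 - x) + 1) x := by
  have h1 : (1 : ℝ) - x ≠ 0 := by linarith
  have hsub : HasDerivAt (fun x : ℝ => 1 - x) (-1) x := by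
    exact (hasDerivAt_id x).const_sub 1
  have hlog : HasDerivAt (fun x : ℝ => Real.log (1 - x)) ((1 - x)⁻¹ * -1) x :=
    (Real.hasDerivAt_log h1).comp x hsub
  have h := hsub.mul hlog.neg
  exact h.congr_deriv (by simp only [Pi.neg_apply]; linear_combination (mul_inv_cancel₀ h1))

private lemma concave_h {R : ℝ} (hR1 : R < 1) :
    StrictConcaveOn ℝ (Icc (0 : ℝ) R) (fun x : ℝ => (1 - x) * (-Real.log (1 - x))) := by
  apply strictConcaveOn_of_deriv2_neg (convex_Icc _ _)
  · intro x hx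
    exact (hasDerivAt_h (lt_of_le_of_lt hx.2 hR1)).differentiableAt.continuousAt.continuousWithinAt
  · intro x hx
    rw [interior_Icc] at hx
    have hx1 : x < 1 := lt_trans hx.2 hR1
    have h1 : (0 : ℝ) < 1 - x := by linarith
    have heq : ∀ y ∈ Iio (1 : ℝ),
        deriv (fun x : ℝ => (1 - x) * (-Real.log (1 - x))) y = Real.log (1 - y) + 1 := by
      intro y hy
      exact (hasDerivAt_h hy).deriv
    have hmem : Iio (1 : ℝ) ∈ nhds x := Iio_mem_nhds hx1
    have hev : deriv (fun x : ℝ => (1 - x) * (-Real.log (1 - x)))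
        =ᶠ[nhds x] fun y => Real.log (1 - y) + 1 :=
      Filter.eventuallyEq_of_mem hmem heq
    have hd2 : HasDerivAt (fun y : ℝ => Real.log (1 - y) + 1) ((1 - x)⁻¹ * -1) x := by
      have hsub : HasDerivAt (fun x : ℝ => 1 - x) (-1) x := by
        exact (hasDerivAt_id x).const_sub 1
      exact ((Real.hasDerivAt_log (ne_of_gt h1)).comp x hsub).add_const 1
    have : deriv^[2] (fun x : ℝ => (1 - x) * (-Real.log (1 - x))) x = (1 - x)⁻¹ * -1 := by
      simp only [Function.iterate_succ, Function.iterate_zero, Function.comp_apply, id_eq]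
      rw [hev.deriv_eq]
      exact hd2.deriv
    rw [this]
    have : (0 : ℝ) < (1 - x)⁻¹ := inv_pos.mpr h1
    nlinarith

/-- For `r ≤ R_γ`, the function `P(a)` is bounded by `P(1) = (1/r) log(1/(1-r))`. -/
theorem P_le_at_R (γ Rγ : ℝ) (hγ0 : 0 ≤ γ) (hγ1 : γ < 1)
    (hR : Rγ ∈ Set.Ioo (0 : ℝ) 1)
    (hroot : (3 + γ) * (1 - Rγ) * Real.log (1 / (1 - Rγ)) = 2 * Rγ) :
    ∀ r ∈ Set.Ioc (0 : ℝ) Rγ, ∀ a ∈ Set.Icc (0 : ℝ) 1,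
      (a / r) * Real.log (1 / (1 - r)) +
        ((1 - a ^ 2) / (1 + γ)) * (1 / (1 - r) - (1 / r) * Real.log (1 / (1 - r)))
        ≤ (1 / r) * Real.log (1 / (1 - r)) := by
  obtain ⟨hR0, hR1⟩ := hR
  intro r hr a ha
  obtain ⟨hr0, hrR⟩ := hr
  obtain ⟨ha0, ha1⟩ := ha
  have hr1 : r < 1 := lt_of_le_of_lt hrR hR1
  have h1r : (0 : ℝ) < 1 - r := by linarith
  have h1R : (0 : ℝ) < 1 - Rγ := by linarith
  have hγp : (0 : ℝ) < 1 + γ := by linarith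
  -- key concavity bound: (3+γ) * (1-r)*(-log(1-r)) ≥ 2r
  set h : ℝ → ℝ := fun x => (1 - x) * (-Real.log (1 - x)) with hh
  have hconc := (concave_h hR1).concaveOn
  have hkey : 2 * r ≤ (3 + γ) * h r := by
    rcases eq_or_lt_of_le hrR with heq | hlt
    · subst heq
      simp only [hh]
      rw [one_div, Real.log_inv] at hroot
      nlinarith [hroot]
    · -- h r ≥ (r/Rγ) * h Rγ by concavity
      have h0mem : (0 : ℝ) ∈ Icc (0 : ℝ) Rγ := ⟨le_refl _, le_of_lt hR0⟩
      have hRmem : Rγ ∈ Icc (0 : ℝ) Rγ := ⟨le_of_lt hR0, le_refl _⟩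
      have hta : (0 : ℝ) ≤ 1 - r / Rγ := by
        rw [sub_nonneg, div_le_one hR0]; exact hrR
      have htb : (0 : ℝ) ≤ r / Rγ := div_nonneg (le_of_lt hr0) (le_of_lt hR0)
      have htab : (1 - r / Rγ) + r / Rγ = 1 := by ring
      have hcomb := hconc.2 h0mem hRmem hta htb htab
      have harg : (1 - r / Rγ) • (0 : ℝ) + (r / Rγ) • Rγ = r := by
        rw [smul_zero, zero_add, smul_eq_mul, div_mul_cancel₀ r hR0.ne']
      rw [harg] at hcomb
      simp only [smul_eq_mul] at hcomb
      have hcomb2 : r / Rγ * ((1 - Rγ) * -Real.log (1 - Rγ)) ≤ h r := by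
        simpa [hh] using hcomb
      replace hcomb := hcomb2
      have hRval : (3 + γ) * ((1 - Rγ) * -Real.log (1 - Rγ)) = 2 * Rγ := by
        rw [one_div, Real.log_inv] at hroot
        nlinarith [hroot]
      have h3γ' : (0 : ℝ) < 3 + γ := by linarith
      have hmul := mul_le_mul_of_nonneg_left hcomb (le_of_lt h3γ')
      calc 2 * r = r / Rγ * (2 * Rγ) := by field_simp
        _ = r / Rγ * ((3 + γ) * ((1 - Rγ) * -Real.log (1 - Rγ))) := by rw [hRval]
        _ = (3 + γ) * (r / Rγ * ((1 - Rγ) * -Real.log (1 - Rγ))) := by ring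
        _ ≤ (3 + γ) * h r := hmul
  -- bound H = (1-r)(-log(1-r)) ≤ r
  have hHle : h r ≤ r := by
    have hlog : Real.log ((1 - r)⁻¹) ≤ (1 - r)⁻¹ - 1 :=
      Real.log_le_sub_one_of_pos (inv_pos.mpr h1r)
    rw [Real.log_inv] at hlog
    have : -Real.log (1 - r) ≤ (1 - r)⁻¹ - 1 := hlog
    have h2 : (1 - r) * (-Real.log (1 - r)) ≤ (1 - r) * ((1 - r)⁻¹ - 1) :=
      mul_le_mul_of_nonneg_left this (le_of_lt h1r)
    rw [hh]
    calc (1 - r) * (-Real.log (1 - r)) ≤ (1 - r) * ((1 - r)⁻¹ - 1) := h2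
      _ = r := by field_simp; ring
  have hH0 : 0 ≤ h r := by
    rw [hh]
    apply mul_nonneg (le_of_lt h1r)
    simp only [neg_nonneg]
    apply Real.log_nonpos (by linarith) (by linarith)
  -- now the main algebra
  rw [show Real.log (1 / (1 - r)) = -Real.log (1 - r) by rw [one_div, Real.log_inv]]
  rw [← sub_nonneg]
  have hexpand : (1 / r) * (-Real.log (1 - r)) -
      ((a / r) * (-Real.log (1 - r)) +
        ((1 - a ^ 2) / (1 + γ)) * (1 / (1 - r) - (1 / r) * (-Real.log (1 - r)))) =
      ((1 - a) * ((2 + γ + a) * h r - (1 + a) * r)) / (r * (1 + γ) * (1 - r)) := by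
    rw [hh]
    field_simp
    ring
  rw [hexpand]
  apply div_nonneg
  · have hfact : 0 ≤ (2 + γ + a) * h r - (1 + a) * r := by
      nlinarith [mul_nonneg (sub_nonneg.mpr ha1) hH0, hkey, mul_nonneg ha0 hH0]
    exact mul_nonneg (by linarith) hfact
  · positivity
end

section
/- If f is analytic on the unit disk with |f| ≤ 1 and f(z) = Σ_{n≥0} a_n z^n, then Σ_{n≥0} (1/(n+1))(Σ_{k=0}^n |a_k|) r^n ≤ (1/r) log(1/(1-r)) for all r ∈ (0, R], where R ∈ (0,1) is the positive root of 2x = 3(1-x)log(1/(1-x)) (R ≈ 0.5335). -/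
open Complex Metric Set Finset

lemma mobius_lt_one {u v : ℂ} (hu : ‖u‖ < 1) (hv : ‖v‖ < 1) :
    ‖(u - v) / (1 - (starRingEnd ℂ) v * u)‖ < 1 := by
  have hnu : Complex.normSq u < 1 := by rw [← Complex.sq_norm]; nlinarith [norm_nonneg u]
  have hnv : Complex.normSq v < 1 := by rw [← Complex.sq_norm]; nlinarith [norm_nonneg v]
  have hid : Complex.normSq (1 - (starRingEnd ℂ) v * u) - Complex.normSq (u - v)
      = (1 - Complex.normSq u) * (1 - Complex.normSq v) := by
    simp only [Complex.normSq_apply, Complex.sub_re, Complex.sub_im, Complex.mul_re,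
      Complex.mul_im, Complex.conj_re, Complex.conj_im, Complex.one_re, Complex.one_im]
    ring
  have hlt : Complex.normSq (u - v) < Complex.normSq (1 - (starRingEnd ℂ) v * u) := by
    nlinarith
  have hden : ‖u - v‖ < ‖1 - (starRingEnd ℂ) v * u‖ := by
    have := Real.sqrt_lt_sqrt (Complex.normSq_nonneg _) hlt
    simpa [Complex.norm_def] using this
  rw [norm_div]
  exact (div_lt_one (lt_of_le_of_lt (norm_nonneg _) hden)).2 hden

lemma one_sub_conj_mul_ne_zero {u v : ℂ} (hu : ‖u‖ < 1) (hv : ‖v‖ < 1) :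
    1 - (starRingEnd ℂ) v * u ≠ 0 := by
  intro h
  have h1 : (1 : ℂ) = (starRingEnd ℂ) v * u := by linear_combination h
  have : (1 : ℝ) = ‖(starRingEnd ℂ) v * u‖ := by rw [← h1]; simp
  rw [norm_mul, Complex.norm_conj] at this
  nlinarith [norm_nonneg u, norm_nonneg v]

lemma wiener_strict (f : ℂ → ℂ) (a : ℕ → ℂ)
    (hb : ∀ z ∈ ball (0 : ℂ) 1, ‖f z‖ < 1)
    (hs : ∀ z ∈ ball (0 : ℂ) 1, HasSum (fun m : ℕ => a m * z ^ m) (f z))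
    (n : ℕ) (hn : 1 ≤ n) :
    ‖a n‖ ≤ 1 - ‖a 0‖ ^ 2 := by
  have hn0 : (n : ℂ) ≠ 0 := Nat.cast_ne_zero.2 (by omega)
  have hprim := Complex.isPrimitiveRoot_exp n (by omega)
  set ω := Complex.exp (2 * Real.pi * Complex.I / n) with hω
  -- |ω| = 1
  have habsω : ‖ω‖ = 1 := by
    have h1 : ‖ω‖ ^ n = 1 := by
      rw [← norm_pow, hprim.pow_eq_one, norm_one]
    rcases lt_trichotomy (‖ω‖) 1 with h | h | h
    · exact absurd h1 (by nlinarith [pow_lt_one₀ (norm_nonneg ω) h (by omega : n ≠ 0)])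
    · exact h
    · exact absurd h1 (by nlinarith [one_lt_pow₀ h (by omega : n ≠ 0)])
  -- root of unity sum
  have hroot : ∀ m : ℕ, ∑ j ∈ Finset.range n, (ω ^ m) ^ j = if n ∣ m then (n : ℂ) else 0 := by
    intro m
    by_cases hdvd : n ∣ m
    · rw [if_pos hdvd]
      have h1 : ω ^ m = 1 := (hprim.pow_eq_one_iff_dvd m).2 hdvd
      simp [h1]
    · rw [if_neg hdvd]
      have h1 : ω ^ m ≠ 1 := fun h => hdvd ((hprim.pow_eq_one_iff_dvd m).1 h)
      rw [geom_sum_eq h1]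
      have h2 : (ω ^ m) ^ n = 1 := by
        rw [← pow_mul, mul_comm, pow_mul, hprim.pow_eq_one, one_pow]
      simp [h2]
  set c : ℕ → ℂ := fun m => if n ∣ m then a m else 0 with hc
  set F : ℂ → ℂ := fun z => (∑ j ∈ Finset.range n, f (ω ^ j * z)) / n with hF
  have hmem : ∀ z : ℂ, z ∈ ball (0 : ℂ) 1 → ∀ j : ℕ, ω ^ j * z ∈ ball (0 : ℂ) 1 := by
    intro z hz j
    simp only [mem_ball, dist_zero_right] at hz ⊢
    rw [norm_mul, norm_pow, habsω, one_pow, one_mul]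
    exact hz
  have hsF : ∀ z ∈ ball (0 : ℂ) 1, HasSum (fun m : ℕ => c m * z ^ m) (F z) := by
    intro z hz
    have h1 : HasSum (fun m : ℕ => ∑ j ∈ Finset.range n, a m * (ω ^ j * z) ^ m)
        (∑ j ∈ Finset.range n, f (ω ^ j * z)) :=
      hasSum_sum fun j _ => hs _ (hmem z hz j)
    have h2 := h1.div_const (n : ℂ)
    refine h2.congr_fun fun m => ?_
    have : ∀ j : ℕ, a m * (ω ^ j * z) ^ m = a m * z ^ m * (ω ^ m) ^ j := by
      intro j; rw [mul_pow, ← pow_mul, mul_comm j m, pow_mul]; ring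
    rw [Finset.sum_congr rfl fun j _ => this j, ← Finset.mul_sum, hroot m]
    by_cases hdvd : n ∣ m
    · rw [if_pos hdvd]; simp only [hc, if_pos hdvd]
      field_simp
    · rw [if_neg hdvd]; simp only [hc, if_neg hdvd]
      simp
  have hFlt : ∀ z ∈ ball (0 : ℂ) 1, ‖F z‖ < 1 := by
    intro z hz
    have h1 : ‖∑ j ∈ Finset.range n, f (ω ^ j * z)‖ < n := by
      calc ‖∑ j ∈ Finset.range n, f (ω ^ j * z)‖
          ≤ ∑ j ∈ Finset.range n, ‖f (ω ^ j * z)‖ := by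
            exact norm_sum_le _ _
        _ < ∑ _j ∈ Finset.range n, (1 : ℝ) := by
            refine Finset.sum_lt_sum_of_nonempty ⟨0, Finset.mem_range.2 (by omega)⟩ ?_
            intro j _
            exact hb _ (hmem z hz j)
        _ = n := by simp
    rw [hF]
    simp only [norm_div, Complex.norm_natCast]
    rw [div_lt_one (by positivity)]
    exact h1

  -- the function h(w) = sum a_{nk} w^k
  set h : ℂ → ℂ := fun w => ∑' k : ℕ, a (n * k) * w ^ k with hh
  have hsh : ∀ w ∈ ball (0 : ℂ) 1,
      HasSum (fun k : ℕ => a (n * k) * w ^ k) (h w) ∧ ‖h w‖ < 1 := by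
    intro w hw
    simp only [mem_ball, dist_zero_right] at hw
    obtain ⟨z, hz⟩ : ∃ z : ℂ, z ^ n = w := IsAlgClosed.exists_pow_nat_eq w (by omega)
    have hzlt : z ∈ ball (0 : ℂ) 1 := by
      simp only [mem_ball, dist_zero_right]
      by_contra hge
      push_neg at hge
      have : (1 : ℝ) ≤ ‖z‖ ^ n := one_le_pow₀ hge
      rw [← norm_pow, hz] at this
      linarith
    have hinj : Function.Injective (fun k : ℕ => n * k) := fun x y hxy => by
      simpa [Nat.mul_right_cancel_iff (show 0 < n by omega)] using
        Nat.eq_of_mul_eq_mul_left (by omega) hxy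
    have hsupp : ∀ m : ℕ, m ∉ Set.range (fun k : ℕ => n * k) → c m * z ^ m = 0 := by
      intro m hm
      have : ¬ n ∣ m := fun ⟨k, hk⟩ => hm ⟨k, hk.symm⟩
      simp [hc, this]
    have hcomp : HasSum ((fun m : ℕ => c m * z ^ m) ∘ fun k : ℕ => n * k) (F z) :=
      (hinj.hasSum_iff hsupp).2 (hsF z hzlt)
    have heq : ((fun m : ℕ => c m * z ^ m) ∘ fun k : ℕ => n * k)
        = fun k : ℕ => a (n * k) * w ^ k := by
      funext k
      simp only [Function.comp_apply, hc, if_pos (Dvd.intro k rfl), pow_mul, hz]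
    rw [heq] at hcomp
    have htsum : h w = F z := hcomp.tsum_eq
    exact ⟨htsum ▸ hcomp, htsum ▸ hFlt z hzlt⟩

  -- power series of h
  set qh : FormalMultilinearSeries ℂ ℂ ℂ :=
    fun k => ContinuousMultilinearMap.mkPiRing ℂ (Fin k) (a (n * k)) with hqh
  have hqhnorm : ∀ k : ℕ, ‖qh k‖ = ‖a (n * k)‖ := by
    intro k
    simp [hqh, ContinuousMultilinearMap.norm_mkPiRing]
  have hrad : 1 ≤ qh.radius := by
    refine ENNReal.le_of_forall_nnreal_lt fun r hr => ?_
    have hr1 : (r : ℝ) < 1 := by exact_mod_cast hr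
    have hmemr : ((r : ℝ) : ℂ) ∈ ball (0 : ℂ) 1 := by
      simp only [mem_ball, dist_zero_right, Complex.norm_real, Real.norm_eq_abs]
      rw [_root_.abs_of_nonneg r.coe_nonneg]; exact hr1
    have hsum := (hsh _ hmemr).1.summable
    have htend : Filter.Tendsto (fun k : ℕ => ‖qh k‖ * (r : ℝ) ^ k) Filter.atTop (nhds 0) := by
      have h0 := hsum.tendsto_atTop_zero
      have := h0.norm
      rw [norm_zero] at this
      refine this.congr fun k => ?_
      rw [norm_mul, hqhnorm k, norm_pow,
        Complex.norm_real, Real.norm_eq_abs, _root_.abs_of_nonneg r.coe_nonneg]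
    exact qh.le_radius_of_tendsto htend
  have hps : HasFPowerSeriesOnBall h qh 0 1 := by
    refine ⟨hrad, by norm_num, fun {y} hy => ?_⟩
    have hy1 : y ∈ ball (0 : ℂ) 1 := by
      rw [EMetric.mem_ball, edist_zero_right, enorm_eq_nnnorm] at hy
      simp only [mem_ball, dist_zero_right]
      exact_mod_cast hy
    have := (hsh y hy1).1
    rw [zero_add]
    refine this.congr_fun fun k => ?_
    simp [hqh, ContinuousMultilinearMap.mkPiRing_apply, smul_eq_mul, mul_comm]
  have hdiff : DifferentiableOn ℂ h (ball (0 : ℂ) 1) := by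
    have := hps.differentiableOn
    intro w hw
    refine (this (x := w) ?_).mono ?_
    · rw [EMetric.mem_ball, edist_zero_right, enorm_eq_nnnorm]
      simp only [mem_ball, dist_zero_right] at hw
      exact_mod_cast hw
    · intro x hx
      rw [EMetric.mem_ball, edist_zero_right, enorm_eq_nnnorm]
      simp only [mem_ball, dist_zero_right] at hx
      exact_mod_cast hx
  -- value at 0
  have h0mem : (0 : ℂ) ∈ ball (0 : ℂ) 1 := by simp
  have hh0 : h 0 = a 0 := by
    have h1 := (hsh 0 h0mem).1
    have h2 : HasSum (fun k : ℕ => a (n * k) * (0 : ℂ) ^ k) (a 0) := by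
      have := hasSum_single (f := fun k : ℕ => a (n * k) * (0 : ℂ) ^ k) 0
        (fun k hk => by simp [zero_pow hk])
      simpa using this
    exact h1.unique h2
  have ha0lt : ‖a 0‖ < 1 := hh0 ▸ (hsh 0 h0mem).2
  -- Möbius transform g
  set g : ℂ → ℂ := fun w => (h w - a 0) / (1 - (starRingEnd ℂ) (a 0) * h w) with hg
  have hden : ∀ w ∈ ball (0 : ℂ) 1, 1 - (starRingEnd ℂ) (a 0) * h w ≠ 0 := fun w hw =>
    one_sub_conj_mul_ne_zero (hsh w hw).2 ha0lt
  have hg0 : g 0 = 0 := by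
    simp [hg, hh0]
  have hgmaps : Set.MapsTo g (ball (0 : ℂ) 1) (ball (g 0) 1) := by
    intro w hw
    rw [hg0]
    simp only [mem_ball, dist_zero_right]
    exact mobius_lt_one (hsh w hw).2 ha0lt
  have hgdiff : DifferentiableOn ℂ g (ball (0 : ℂ) 1) := by
    refine DifferentiableOn.div (hdiff.sub_const _) ?_ hden
    exact (differentiableOn_const _).sub (hdiff.const_mul _)
  have hschwarz : ‖deriv g 0‖ ≤ 1 / 1 :=
    Complex.norm_deriv_le_div_of_mapsTo_ball hgdiff (hgmaps.mono_right ball_subset_closedBall) one_pos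
  -- compute deriv g 0
  have hda : HasDerivAt h (a n) 0 := by
    have := hps.hasFPowerSeriesAt.hasDerivAt
    have heq : (qh 1 fun _ => (1 : ℂ)) = a n := by
      simp [hqh, ContinuousMultilinearMap.mkPiRing_apply]
    rwa [heq] at this
  have hdenne : 1 - (starRingEnd ℂ) (a 0) * h 0 ≠ 0 := hden 0 h0mem
  have hdg : HasDerivAt g (a n / (1 - (starRingEnd ℂ) (a 0) * a 0)) 0 := by
    have hnum : HasDerivAt (fun w => h w - a 0) (a n) 0 := hda.sub_const _
    have hden' : HasDerivAt (fun w => 1 - (starRingEnd ℂ) (a 0) * h w)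
        (-((starRingEnd ℂ) (a 0) * a n)) 0 := (hda.const_mul _).const_sub 1
    have := hnum.div hden' hdenne
    rw [hh0] at this hdenne
    refine this.congr_deriv ?_
    rw [sub_self, zero_mul, sub_zero, sq, mul_div_mul_right _ _ hdenne]
  have hderiv : deriv g 0 = a n / (1 - (starRingEnd ℂ) (a 0) * a 0) := hdg.deriv
  -- conclude
  have hmulconj : (starRingEnd ℂ) (a 0) * a 0 = (Complex.normSq (a 0) : ℂ) := by
    rw [mul_comm, Complex.mul_conj]
  have hnormsqlt : Complex.normSq (a 0) < 1 := by
    rw [← Complex.sq_norm]; nlinarith [norm_nonneg (a 0)]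
  have habsden : ‖1 - (starRingEnd ℂ) (a 0) * a 0‖ = 1 - Complex.normSq (a 0) := by
    rw [hmulconj]
    rw [show (1 : ℂ) - (Complex.normSq (a 0) : ℂ) = ((1 - Complex.normSq (a 0) : ℝ) : ℂ) by
      push_cast; ring]
    rw [Complex.norm_real, Real.norm_eq_abs, _root_.abs_of_nonneg (by linarith)]
  rw [hderiv] at hschwarz
  rw [norm_div, habsden] at hschwarz
  rw [div_le_iff₀ (by linarith), one_div, ← Complex.sq_norm] at hschwarz
  calc ‖a n‖ ≤ 1⁻¹ * (1 - ‖a 0‖ ^ 2) := hschwarz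
    _ = 1 - ‖a 0‖ ^ 2 := by ring

lemma wiener (f : ℂ → ℂ) (a : ℕ → ℂ)
    (hb : ∀ z ∈ ball (0 : ℂ) 1, ‖f z‖ ≤ 1)
    (hs : ∀ z ∈ ball (0 : ℂ) 1, HasSum (fun m : ℕ => a m * z ^ m) (f z))
    (n : ℕ) (hn : 1 ≤ n) :
    ‖a n‖ ≤ 1 - ‖a 0‖ ^ 2 := by
  have key : ∀ t : ℝ, t ∈ Ioo (0 : ℝ) 1 →
      t * ‖a n‖ ≤ 1 - t ^ 2 * ‖a 0‖ ^ 2 := by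
    intro t ht
    have hb' : ∀ z ∈ ball (0 : ℂ) 1, ‖(t : ℂ) * f z‖ < 1 := by
      intro z hz
      rw [norm_mul, Complex.norm_real, Real.norm_eq_abs, _root_.abs_of_nonneg ht.1.le]
      calc t * ‖f z‖ ≤ t * 1 := by
            have := hb z hz
            nlinarith [ht.1]
        _ < 1 := by linarith [ht.2]
    have hs' : ∀ z ∈ ball (0 : ℂ) 1,
        HasSum (fun m : ℕ => ((t : ℂ) * a m) * z ^ m) ((t : ℂ) * f z) := by
      intro z hz
      exact ((hs z hz).mul_left _).congr_fun fun m => by ring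
    have := wiener_strict _ _ hb' hs' n hn
    simp only [norm_mul, Complex.norm_real, Real.norm_eq_abs, _root_.abs_of_nonneg ht.1.le] at this
    calc t * ‖a n‖ ≤ 1 - (t * ‖a 0‖) ^ 2 := this
      _ = 1 - t ^ 2 * ‖a 0‖ ^ 2 := by ring
  have h1 : Filter.Tendsto (fun t : ℝ => t * ‖a n‖) (nhdsWithin 1 (Iio 1))
      (nhds (‖a n‖)) := by
    have hc : Continuous fun t : ℝ => t * ‖a n‖ := by continuity
    have := hc.tendsto (1 : ℝ)
    simp only [one_mul] at this
    exact this.mono_left nhdsWithin_le_nhds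
  have h2 : Filter.Tendsto (fun t : ℝ => 1 - t ^ 2 * ‖a 0‖ ^ 2)
      (nhdsWithin 1 (Iio 1)) (nhds (1 - ‖a 0‖ ^ 2)) := by
    have : Continuous fun t : ℝ => 1 - t ^ 2 * ‖a 0‖ ^ 2 := by continuity
    have := this.tendsto (1 : ℝ)
    simp only [one_pow, one_mul] at this
    exact this.mono_left nhdsWithin_le_nhds
  refine le_of_tendsto_of_tendsto h1 h2 ?_
  filter_upwards [Ioo_mem_nhdsLT_of_mem (by constructor <;> norm_num : (1:ℝ) ∈ Ioc (0:ℝ) 1)]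
    with t ht using key t ht

-- concavity step
lemma key_log_ineq {R r : ℝ} (hR : R ∈ Set.Ioo (0 : ℝ) 1)
    (hroot : 2 * R = 3 * (1 - R) * Real.log (1 / (1 - R)))
    (hr : r ∈ Set.Ioc (0 : ℝ) R) :
    2 * r ≤ 3 * (1 - r) * Real.log (1 / (1 - r)) := by
  obtain ⟨hR0, hR1⟩ := hR
  obtain ⟨hr0, hrR⟩ := hr
  set t : ℝ := r / R with hts
  have ht0 : 0 ≤ t := by positivity
  have ht1 : t ≤ 1 := by rw [hts, div_le_one hR0]; exact hrR
  have htR : t * R = r := by rw [hts]; field_simp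
  have hcc := Real.concaveOn_negMulLog.2 (mem_Ici.2 (by norm_num : (0:ℝ) ≤ 1))
    (mem_Ici.2 (by linarith : (0:ℝ) ≤ 1 - R)) (by linarith : (0:ℝ) ≤ 1 - t) ht0
    (by ring : (1 - t) + t = 1)
  rw [smul_eq_mul, smul_eq_mul, smul_eq_mul, smul_eq_mul] at hcc
  have harg : (1 - t) * 1 + t * (1 - R) = 1 - r := by rw [← htR]; ring
  rw [harg, Real.negMulLog_one, mul_zero, zero_add] at hcc
  have hnml : ∀ x : ℝ, 0 < x → Real.negMulLog x = x * Real.log (1 / x) := by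
    intro x hx
    rw [Real.negMulLog, one_div, Real.log_inv]; ring
  rw [hnml _ (by linarith)] at hcc
  have hgoal : 3 * Real.negMulLog (1 - r) = 3 * (1 - r) * Real.log (1 / (1 - r)) := by
    rw [hnml _ (by linarith)]; ring
  have : t * ((1 - R) * Real.log (1 / (1 - R))) = t * (2 * R) / 3 := by
    rw [hroot]; ring
  nlinarith [hcc]

/-- Bohr type inequality for the Cesàro operator on the unit disk (Kayumov et al.). -/
theorem cesaro_bohr_unit_disk (f : ℂ → ℂ) (a : ℕ → ℂ) (R : ℝ)
    (hf : AnalyticOn ℂ f (Metric.ball (0 : ℂ) 1))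
    (hb : ∀ z ∈ Metric.ball (0 : ℂ) 1, ‖f z‖ ≤ 1)
    (hs : ∀ z ∈ Metric.ball (0 : ℂ) 1, HasSum (fun n : ℕ => a n * z ^ n) (f z))
    (hR : R ∈ Set.Ioo (0 : ℝ) 1)
    (hroot : 2 * R = 3 * (1 - R) * Real.log (1 / (1 - R))) :
    ∀ r ∈ Set.Ioc (0 : ℝ) R,
      (∑' n : ℕ, (1 / ((n : ℝ) + 1)) * (∑ k ∈ Finset.range (n + 1), ‖a k‖) * r ^ n)
        ≤ (1 / r) * Real.log (1 / (1 - r)) := by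
  intro r hr
  obtain ⟨hr0, hrR⟩ := hr
  have hr1 : r < 1 := lt_of_le_of_lt hrR hR.2
  have h1r : 0 < 1 - r := by linarith
  obtain ⟨A, hA⟩ : ∃ A : ℝ, A = ‖a 0‖ := ⟨_, rfl⟩
  obtain ⟨L, hL⟩ : ∃ L : ℝ, L = (1 / r) * Real.log (1 / (1 - r)) := ⟨_, rfl⟩
  obtain ⟨G, hG⟩ : ∃ G : ℝ, G = 1 / (1 - r) := ⟨_, rfl⟩
  have hf0 : f 0 = a 0 := by
    have h1 := hs 0 (by simp)
    have h2 : HasSum (fun m : ℕ => a m * (0 : ℂ) ^ m) (a 0) := by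
      have := hasSum_single (f := fun m : ℕ => a m * (0 : ℂ) ^ m) 0
        (fun m hm => by simp [zero_pow hm])
      simpa using this
    exact h1.unique h2
  have hA0 : 0 ≤ A := hA ▸ norm_nonneg _
  have hA1 : A ≤ 1 := by rw [hA, ← hf0]; exact hb 0 (by simp)
  have hB0 : 0 ≤ 1 - A ^ 2 := by nlinarith
  have hW : ∀ k : ℕ, 1 ≤ k → ‖a k‖ ≤ 1 - A ^ 2 := fun k hk =>
    hA ▸ wiener f a hb hs k hk
  have hAn : ∀ n : ℕ, (∑ k ∈ Finset.range (n + 1), ‖a k‖) ≤ A + n * (1 - A ^ 2) := by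
    intro n
    induction n with
    | zero => simp [← hA]
    | succ m ih =>
      rw [Finset.sum_range_succ]
      have := hW (m + 1) (by omega)
      push_cast
      push_cast at ih
      linarith
  have hrne : r ≠ 0 := ne_of_gt hr0
  have hLsum : HasSum (fun n : ℕ => r ^ n / ((n : ℝ) + 1)) L := by
    have h0 := Real.hasSum_pow_div_log_of_abs_lt_one
      (x := r) (by rw [_root_.abs_of_nonneg hr0.le]; exact hr1)
    have h1 := h0.mul_left (1 / r)
    have h2 : (1 / r) * (-Real.log (1 - r)) = L := by
      rw [hL, one_div (1 - r), Real.log_inv]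
    rw [h2] at h1
    refine h1.congr_fun fun n => ?_
    rw [pow_succ]
    field_simp
  have hGsum : HasSum (fun n : ℕ => r ^ n) G := by
    have := hasSum_geometric_of_lt_one hr0.le hr1
    rwa [hG, one_div]
  have hMsum : HasSum (fun n : ℕ => ((n : ℝ) / ((n : ℝ) + 1)) * r ^ n) (G - L) := by
    refine (hGsum.sub hLsum).congr_fun fun n => ?_
    have hn1 : ((n : ℝ) + 1) ≠ 0 := by positivity
    field_simp
    ring
  have hUsum : HasSum (fun n : ℕ => A * (r ^ n / ((n : ℝ) + 1))
      + (1 - A ^ 2) * (((n : ℝ) / ((n : ℝ) + 1)) * r ^ n)) (A * L + (1 - A ^ 2) * (G - L)) :=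
    (hLsum.mul_left A).add (hMsum.mul_left (1 - A ^ 2))
  have hpt : ∀ n : ℕ, (1 / ((n : ℝ) + 1)) * (∑ k ∈ Finset.range (n + 1), ‖a k‖) * r ^ n
      ≤ A * (r ^ n / ((n : ℝ) + 1)) + (1 - A ^ 2) * (((n : ℝ) / ((n : ℝ) + 1)) * r ^ n) := by
    intro n
    have hn1 : (0 : ℝ) < (n : ℝ) + 1 := by positivity
    have hrn : (0 : ℝ) ≤ r ^ n := by positivity
    have h1 : (1 / ((n : ℝ) + 1)) * (∑ k ∈ Finset.range (n + 1), ‖a k‖) * r ^ n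
        ≤ (1 / ((n : ℝ) + 1)) * (A + n * (1 - A ^ 2)) * r ^ n := by
      refine mul_le_mul_of_nonneg_right ?_ hrn
      exact mul_le_mul_of_nonneg_left (hAn n) (by positivity)
    refine h1.trans_eq ?_
    field_simp
  have hnonneg : ∀ n : ℕ,
      0 ≤ (1 / ((n : ℝ) + 1)) * (∑ k ∈ Finset.range (n + 1), ‖a k‖) * r ^ n := by
    intro n
    have h1 : (0:ℝ) ≤ ∑ k ∈ Finset.range (n + 1), ‖a k‖ :=
      Finset.sum_nonneg fun k _ => norm_nonneg _
    have h2 : (0:ℝ) < (n : ℝ) + 1 := by positivity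
    have hrn : (0 : ℝ) ≤ r ^ n := by positivity
    positivity
  have hTsum : Summable (fun n : ℕ =>
      (1 / ((n : ℝ) + 1)) * (∑ k ∈ Finset.range (n + 1), ‖a k‖) * r ^ n) :=
    Summable.of_nonneg_of_le hnonneg hpt hUsum.summable
  have hle : (∑' n : ℕ, (1 / ((n : ℝ) + 1)) * (∑ k ∈ Finset.range (n + 1), ‖a k‖) * r ^ n)
      ≤ A * L + (1 - A ^ 2) * (G - L) := by
    rw [← hUsum.tsum_eq]
    exact Summable.tsum_le_tsum hpt hTsum hUsum.summable
  rw [← hL]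
  refine hle.trans ?_
  have hM0 : 0 ≤ G - L := by
    have hlog : Real.log (1 / (1 - r)) ≤ 1 / (1 - r) - 1 :=
      Real.log_le_sub_one_of_pos (by positivity)
    have hinvr : (0:ℝ) < 1 / r := by positivity
    have h2 : (1 / r) * Real.log (1 / (1 - r)) ≤ (1 / r) * (1 / (1 - r) - 1) :=
      mul_le_mul_of_nonneg_left hlog hinvr.le
    have h3 : (1 / r) * (1 / (1 - r) - 1) = 1 / (1 - r) := by field_simp; ring
    rw [hL, hG]
    linarith
  have hkey := key_log_ineq hR hroot ⟨hr0, hrR⟩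
  have h2GL : 2 * G ≤ 3 * L := by
    rw [hG, hL]
    have hlogr : 0 ≤ Real.log (1 / (1 - r)) := by
      refine Real.log_nonneg ?_
      rw [le_div_iff₀ h1r]
      linarith
    rw [show (2:ℝ) * (1 / (1 - r)) = 2 / (1 - r) by ring,
      show (3:ℝ) * (1 / r * Real.log (1 / (1 - r))) = (3 * Real.log (1 / (1 - r))) / r by ring,
      div_le_div_iff₀ h1r hr0]
    nlinarith [hkey]
  nlinarith [mul_nonneg (sub_nonneg.2 hA1)
    (sub_nonneg.2 (by nlinarith : (1 + A) * (G - L) ≤ L)), hM0, hA0, hA1]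
end

section
/- Let 0 ≤ γ < 1, β > 0, and let f be analytic on Ω_γ = {z : |z + γ/(1-γ)| < 1/(1-γ)} with |f| ≤ 1, with Taylor expansion f(z) = Σ_{n≥0} a_n z^n on the unit disk. Then Σ_{n≥0} |a_n| r^n/(n+β) ≤ 1/β for all r ∈ [0, R_{γ,β}], where R_{γ,β} ∈ (0,1) is the positive root of 1/β = (2/(1+γ))Σ_{n≥1} x^n/(n+β). -/
open Metric Set Complex Filter
open scoped NNReal Real ENNReal

set_option maxHeartbeats 1000000

noncomputable section BernardiBohrAux



/-- Key algebraic identity for Möbius maps. -/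
lemma bernardi_normSq_aux (a w : ℂ) :
    Complex.normSq (1 - (starRingEnd ℂ) a * w) - Complex.normSq (w - a)
      = (1 - Complex.normSq a) * (1 - Complex.normSq w) := by
  simp only [Complex.normSq_apply, Complex.sub_re, Complex.sub_im, Complex.mul_re,
    Complex.mul_im, Complex.one_re, Complex.one_im, Complex.conj_re, Complex.conj_im]
  ring

lemma bernardi_mobius_le (a w : ℂ) (ha : ‖a‖ ≤ 1) (hw : ‖w‖ ≤ 1) :
    ‖w - a‖ ≤ ‖1 - (starRingEnd ℂ) a * w‖ := by
  have h := bernardi_normSq_aux a w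
  have h1 : Complex.normSq a ≤ 1 := by
    rw [← Complex.sq_norm]; nlinarith [norm_nonneg a]
  have h2 : Complex.normSq w ≤ 1 := by
    rw [← Complex.sq_norm]; nlinarith [norm_nonneg w]
  have : Complex.normSq (w - a) ≤ Complex.normSq (1 - (starRingEnd ℂ) a * w) := by
    nlinarith [mul_nonneg (sub_nonneg.2 h1) (sub_nonneg.2 h2)]
  have := Real.sqrt_le_sqrt this
  rwa [← Complex.norm_def, ← Complex.norm_def] at this

/-- Uniqueness of power series coefficients on the unit ball. -/
lemma bernardi_coeff_unique {f : ℂ → ℂ} {a b : ℕ → ℂ}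
    (ha : ∀ z ∈ ball (0:ℂ) 1, HasSum (fun n => a n * z ^ n) (f z))
    (hb : ∀ z ∈ ball (0:ℂ) 1, HasSum (fun n => b n * z ^ n) (f z)) : a = b := by
  have key : ∀ c : ℕ → ℂ, (∀ z ∈ ball (0:ℂ) 1, HasSum (fun n => c n * z ^ n) (f z)) →
      HasFPowerSeriesAt f (FormalMultilinearSeries.ofScalars ℂ c) 0 := by
    intro c hc
    rw [hasFPowerSeriesAt_iff]
    filter_upwards [ball_mem_nhds (0:ℂ) one_pos] with z hz
    have := hc z hz
    simp only [zero_add]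
    convert this using 2 with n
    · rfl
    have hco : (FormalMultilinearSeries.ofScalars ℂ c).coeff n = c n := by
      have h2 := FormalMultilinearSeries.ofScalars_apply_eq (E := ℂ) c 1 n
      rw [FormalMultilinearSeries.coeff, show (1 : Fin n → ℂ) = fun _ => (1:ℂ) from rfl,
        h2, smul_eq_mul, one_pow, mul_one]
    rw [hco, smul_eq_mul]; ring
  have := (key a ha).eq_formalMultilinearSeries (key b hb)
  exact FormalMultilinearSeries.ofScalars_series_injective ℂ ℂ this

/-- Schwarz-Pick inequality at the origin. -/
lemma bernardi_schwarz_pick {C : ℂ → ℂ} (hC : DifferentiableOn ℂ C (ball 0 1))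
    (hCb : ∀ z ∈ ball (0:ℂ) 1, ‖C z‖ ≤ 1) :
    ‖deriv C 0‖ ≤ 1 - ‖C 0‖ ^ 2 := by
  have h0 : (0:ℂ) ∈ ball (0:ℂ) 1 := mem_ball_self one_pos
  have ha1 : ‖C 0‖ ≤ 1 := hCb 0 h0
  rcases eq_or_lt_of_le ha1 with heq | hlt
  · -- |C 0| = 1 : C is constant by max modulus
    have hmax : IsMaxOn (norm ∘ C) (ball (0:ℂ) 1) 0 := by
      intro z hz
      simp only [Function.comp_apply]
      calc ‖C z‖ ≤ 1 := hCb z hz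
        _ = ‖C 0‖ := heq.symm
    have hconst := eqOn_of_isPreconnected_of_isMaxOn_norm
      (convex_ball (0:ℂ) 1).isPreconnected isOpen_ball hC h0 hmax
    have : deriv C 0 = 0 := by
      have : Set.EqOn C (fun _ => C 0) (ball (0:ℂ) 1) := hconst
      have hev : C =ᶠ[nhds 0] (fun _ => C 0) :=
        Filter.eventuallyEq_of_mem (isOpen_ball.mem_nhds h0) this
      rw [hev.deriv_eq, deriv_const]
    rw [this, norm_zero, heq]
    norm_num
  · -- |C 0| < 1
    set t := C 0 with ht
    have hden : ∀ z ∈ ball (0:ℂ) 1, (1 - (starRingEnd ℂ) t * C z) ≠ 0 := by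
      intro z hz
      have : ‖(starRingEnd ℂ) t * C z‖ < 1 := by
        rw [norm_mul, Complex.norm_conj]
        calc ‖t‖ * ‖C z‖ ≤ ‖t‖ * 1 :=
          mul_le_mul_of_nonneg_left (hCb z hz) (norm_nonneg _)
        _ < 1 := by simpa using hlt
      intro h
      rw [sub_eq_zero] at h
      rw [← h] at this
      simp at this
    set B : ℂ → ℂ := fun z => (C z - t) / (1 - (starRingEnd ℂ) t * C z) with hB
    have hBdiff : DifferentiableOn ℂ B (ball 0 1) := by
      apply DifferentiableOn.div
      · exact hC.sub (differentiableOn_const _)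
      · exact (differentiableOn_const _).sub ((differentiableOn_const _).mul hC)
      · exact hden
    have hB0 : B 0 = 0 := by simp [hB, ← ht]
    have hBle : ∀ z ∈ ball (0:ℂ) 1, ‖B z‖ ≤ 1 := by
      intro z hz
      rw [hB]
      simp only [norm_div]
      rw [div_le_one_iff]
      left
      constructor
      · exact (norm_pos_iff.mpr (hden z hz))
      · exact bernardi_mobius_le t (C z) hlt.le (hCb z hz)
    -- Schwarz lemma with target radius 1 + ε
    have hBderiv : ∀ ε : ℝ, 0 < ε → ‖deriv B 0‖ ≤ 1 + ε := by
      intro ε hε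
      have hmaps : MapsTo B (ball (0:ℂ) 1) (ball (B 0) (1 + ε)) := by
        intro z hz
        rw [hB0, mem_ball, dist_zero_right]
        exact lt_of_le_of_lt (hBle z hz) (by linarith)
      have := norm_deriv_le_div_of_mapsTo_ball hBdiff (hmaps.mono_right ball_subset_closedBall) one_pos
      simpa using this
    have hBd1 : ‖deriv B 0‖ ≤ 1 := by
      by_contra h
      push_neg at h
      have := hBderiv ((‖deriv B 0‖ - 1)/2) (by linarith)
      linarith
    -- compute deriv B 0
    have hCd : DifferentiableAt ℂ C 0 := hC.differentiableAt (isOpen_ball.mem_nhds h0)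
    have hCder : HasDerivAt C (deriv C 0) 0 := hCd.hasDerivAt
    have hder : HasDerivAt B (deriv C 0 / (1 - (starRingEnd ℂ) t * t)) 0 := by
      have h1 : HasDerivAt (fun z => C z - t) (deriv C 0) 0 := hCder.sub_const t
      have h2 : HasDerivAt (fun z => 1 - (starRingEnd ℂ) t * C z)
          (-((starRingEnd ℂ) t * deriv C 0)) 0 := by
        simpa using ((hCder.const_mul ((starRingEnd ℂ) t)).const_sub 1)
      have hne := hden 0 h0
      have := h1.div h2 hne
      convert this using 1
      · rfl
      · rfl
      · rfl
      rw [← ht]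
      field_simp [show (1 - (starRingEnd ℂ) t * t) ≠ 0 from hne]
      ring
    have habs : ‖1 - (starRingEnd ℂ) t * t‖ = 1 - ‖t‖ ^ 2 := by
      have : (starRingEnd ℂ) t * t = (Complex.normSq t : ℂ) := by
        rw [mul_comm, Complex.mul_conj]
      rw [this, ← Complex.ofReal_one, ← Complex.ofReal_sub, Complex.norm_real, Real.norm_eq_abs,
        ← Complex.sq_norm,
        _root_.abs_of_nonneg (by nlinarith [norm_nonneg t] : (0:ℝ) ≤ 1 - ‖t‖ ^ 2)]
    have : deriv B 0 = deriv C 0 / (1 - (starRingEnd ℂ) t * t) := hder.deriv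
    rw [this, norm_div, habs] at hBd1
    have hpos : 0 < 1 - ‖t‖ ^ 2 := by nlinarith [norm_nonneg t]
    calc ‖deriv C 0‖ = ‖deriv C 0‖ / (1 - ‖t‖ ^ 2)
        * (1 - ‖t‖ ^ 2) := by field_simp
      _ ≤ 1 * (1 - ‖t‖ ^ 2) := mul_le_mul_of_nonneg_right hBd1 hpos.le
      _ = 1 - ‖t‖ ^ 2 := one_mul _




lemma bernardi_exists_coeffs {G : ℂ → ℂ} (hG : DifferentiableOn ℂ G (ball (0:ℂ) 1)) :
    ∃ d : ℕ → ℂ, ∀ z ∈ ball (0:ℂ) 1, HasSum (fun m => d m * z ^ m) (G z) := by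
  refine ⟨fun m => (cauchyPowerSeries G 0 ((1/2 : ℝ≥0) : ℝ)).coeff m, ?_⟩
  intro z hz
  rw [mem_ball_zero_iff] at hz
  set s : ℝ := (‖z‖ + 1) / 2 with hsdef
  have hs0 : 0 < s := by positivity
  have hzs : ‖z‖ < s := by rw [hsdef]; linarith
  have hs1 : s < 1 := by rw [hsdef]; linarith
  have hsNN : ((s.toNNReal : ℝ)) = s := Real.coe_toNNReal s hs0.le
  have hball : closedBall (0:ℂ) ((s.toNNReal : ℝ)) ⊆ ball (0:ℂ) 1 := by
    rw [hsNN]; exact closedBall_subset_ball hs1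
  have hps : HasFPowerSeriesOnBall G (cauchyPowerSeries G 0 ((s.toNNReal : ℝ))) 0 s.toNNReal :=
    (hG.mono hball).hasFPowerSeriesOnBall (by rw [← Real.toNNReal_pos] at hs0; exact hs0)
  have hball2 : closedBall (0:ℂ) (((1/2 : ℝ≥0) : ℝ)) ⊆ ball (0:ℂ) 1 := by
    apply closedBall_subset_ball; norm_num
  have hps2 : HasFPowerSeriesOnBall G (cauchyPowerSeries G 0 (((1/2:ℝ≥0) : ℝ))) 0 (1/2 : ℝ≥0) :=
    (hG.mono hball2).hasFPowerSeriesOnBall (by norm_num)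
  have heq : cauchyPowerSeries G 0 ((s.toNNReal : ℝ)) = cauchyPowerSeries G 0 (((1/2:ℝ≥0) : ℝ)) :=
    hps.hasFPowerSeriesAt.eq_formalMultilinearSeries hps2.hasFPowerSeriesAt
  have hzmem : z ∈ Metric.eball (0:ℂ) s.toNNReal := by
    rw [Metric.eball_coe, mem_ball_zero_iff, hsNN]; exact hzs
  have := hps.hasSum hzmem
  rw [zero_add] at this
  convert this using 2 with n
  · rfl
  rw [FormalMultilinearSeries.apply_eq_pow_smul_coeff, heq, smul_eq_mul]
  ring

lemma bernardi_bounded_coeff {G : ℂ → ℂ} {d : ℕ → ℂ}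
    (hG : DifferentiableOn ℂ G (ball 0 1))
    (hGb : ∀ z ∈ ball (0:ℂ) 1, ‖G z‖ ≤ 1)
    (hd : ∀ z ∈ ball (0:ℂ) 1, HasSum (fun m => d m * z ^ m) (G z)) :
    ∀ m, ‖d m‖ ≤ 1 := by
  intro m
  have hdat : HasFPowerSeriesAt G (FormalMultilinearSeries.ofScalars ℂ d) 0 := by
    rw [hasFPowerSeriesAt_iff]
    filter_upwards [ball_mem_nhds (0:ℂ) one_pos] with z hz
    have := hd z hz
    simp only [zero_add]
    convert this using 2 with n
    · rfl
    have hco : (FormalMultilinearSeries.ofScalars ℂ d).coeff n = d n := by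
      have h2 := FormalMultilinearSeries.ofScalars_apply_eq (E := ℂ) d 1 n
      rw [FormalMultilinearSeries.coeff, show (1 : Fin n → ℂ) = fun _ => (1:ℂ) from rfl,
        h2, smul_eq_mul, one_pow, mul_one]
    rw [hco, smul_eq_mul]; ring
  have key : ∀ s : ℝ, 0 < s → s < 1 → ‖d m‖ ≤ s⁻¹ ^ m := by
    intro s hs0 hs1
    have hsNN : ((s.toNNReal : ℝ)) = s := Real.coe_toNNReal s hs0.le
    have hball : closedBall (0:ℂ) ((s.toNNReal : ℝ)) ⊆ ball (0:ℂ) 1 := by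
      rw [hsNN]; exact closedBall_subset_ball hs1
    have hps : HasFPowerSeriesOnBall G (cauchyPowerSeries G 0 ((s.toNNReal : ℝ))) 0 s.toNNReal :=
      (hG.mono hball).hasFPowerSeriesOnBall (by rw [← Real.toNNReal_pos] at hs0; exact hs0)
    have heq : FormalMultilinearSeries.ofScalars ℂ d = cauchyPowerSeries G 0 ((s.toNNReal : ℝ)) :=
      hdat.eq_formalMultilinearSeries hps.hasFPowerSeriesAt
    have hdm : d m = (cauchyPowerSeries G 0 ((s.toNNReal : ℝ))).coeff m := by
      rw [← heq]
      have h2 := FormalMultilinearSeries.ofScalars_apply_eq (E := ℂ) d 1 m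
      rw [FormalMultilinearSeries.coeff, show (1 : Fin m → ℂ) = fun _ => (1:ℂ) from rfl,
        h2, smul_eq_mul, one_pow, mul_one]
    -- |coeff| ≤ ‖p m‖
    have hc1 : ‖(cauchyPowerSeries G 0 ((s.toNNReal : ℝ))).coeff m‖
        ≤ ‖cauchyPowerSeries G 0 ((s.toNNReal : ℝ)) m‖ := by
      rw [FormalMultilinearSeries.coeff]
      have := (cauchyPowerSeries G 0 ((s.toNNReal : ℝ)) m).le_opNorm (1 : Fin m → ℂ)
      simpa using this
    -- integral bound
    have hint : (2 * Real.pi)⁻¹ * (∫ θ : ℝ in (0)..2 * Real.pi,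
        ‖G (circleMap 0 ((s.toNNReal : ℝ)) θ)‖) ≤ 1 := by
      have hle : ∀ θ ∈ Set.Icc (0:ℝ) (2 * Real.pi),
          ‖G (circleMap 0 ((s.toNNReal : ℝ)) θ)‖ ≤ 1 := by
        intro θ _
        apply hGb
        rw [mem_ball_zero_iff]
        rw [norm_circleMap_zero, hsNN, abs_of_pos hs0]
        exact hs1
      have hcont : ContinuousOn (fun θ : ℝ => ‖G (circleMap 0 ((s.toNNReal : ℝ)) θ)‖)
          (Set.Icc (0:ℝ) (2 * Real.pi)) := by
        apply ContinuousOn.norm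
        apply hG.continuousOn.comp (continuous_circleMap 0 _).continuousOn
        intro θ _
        rw [mem_ball_zero_iff, norm_circleMap_zero, hsNN, abs_of_pos hs0]
        exact hs1
      have hintle : (∫ θ : ℝ in (0)..2 * Real.pi, ‖G (circleMap 0 ((s.toNNReal : ℝ)) θ)‖)
          ≤ ∫ _ : ℝ in (0)..2 * Real.pi, (1:ℝ) := by
        apply intervalIntegral.integral_mono_on Real.two_pi_pos.le
        · exact (hcont.intervalIntegrable_of_Icc Real.two_pi_pos.le)
        · exact intervalIntegrable_const
        · exact hle
      rw [intervalIntegral.integral_const, smul_eq_mul, mul_one] at hintle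
      calc (2 * Real.pi)⁻¹ * (∫ θ : ℝ in (0)..2 * Real.pi,
            ‖G (circleMap 0 ((s.toNNReal : ℝ)) θ)‖)
          ≤ (2 * Real.pi)⁻¹ * (2 * Real.pi - 0) := by
            apply mul_le_mul_of_nonneg_left hintle
            positivity
        _ = 1 := by
            rw [sub_zero]
            field_simp
    have hnorm := norm_cauchyPowerSeries_le G 0 ((s.toNNReal : ℝ)) m
    have habs : |((s.toNNReal : ℝ))|⁻¹ ^ m = s⁻¹ ^ m := by
      rw [hsNN, abs_of_pos hs0]
    rw [hdm]
    calc ‖(cauchyPowerSeries G 0 ((s.toNNReal : ℝ))).coeff m‖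
        ≤ ‖cauchyPowerSeries G 0 ((s.toNNReal : ℝ)) m‖ := hc1
      _ ≤ ((2 * Real.pi)⁻¹ * ∫ θ : ℝ in (0)..2 * Real.pi,
            ‖G (circleMap 0 ((s.toNNReal : ℝ)) θ)‖) * |((s.toNNReal : ℝ))|⁻¹ ^ m := hnorm
      _ ≤ 1 * s⁻¹ ^ m := by
          rw [habs]
          apply mul_le_mul_of_nonneg_right hint
          positivity
      _ = s⁻¹ ^ m := one_mul _
  -- take the limit s → 1⁻
  have htend : Tendsto (fun s : ℝ => s⁻¹ ^ m) (nhdsWithin 1 (Iio 1)) (nhds 1) := by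
    have : Tendsto (fun s : ℝ => s⁻¹ ^ m) (nhds 1) (nhds ((1:ℝ)⁻¹ ^ m)) :=
      ((continuousAt_inv₀ one_ne_zero).pow m).tendsto
    simpa using this.mono_left nhdsWithin_le_nhds
  apply ge_of_tendsto htend
  filter_upwards [Ioo_mem_nhdsLT_of_mem (Set.mem_Ioc.2 ⟨(by norm_num : (1:ℝ)/2 < 1), le_refl 1⟩)]
    with s hs
  exact key s (by linarith [hs.1]) hs.2




/-- Coefficients of `(z/(1+γ-γz))^k` as a power series in `z`. -/
def bernardiE (γ : ℝ) (n k : ℕ) : ℝ :=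
  if 1 ≤ k ∧ k ≤ n then ((n - 1).choose (k-1) : ℝ) * γ^(n-k) / (1+γ)^n
  else if k = 0 ∧ n = 0 then 1 else 0

lemma bernardiE_nonneg {γ : ℝ} (hγ0 : 0 ≤ γ) (n k : ℕ) : 0 ≤ bernardiE γ n k := by
  rw [bernardiE]
  split_ifs
  · positivity
  · norm_num
  · norm_num

lemma bernardiE_eq_zero_of_lt {γ : ℝ} {n k : ℕ} (h : n < k) : bernardiE γ n k = 0 := by
  rw [bernardiE, if_neg, if_neg]
  · rintro ⟨hk0, hn0⟩; omega
  · rintro ⟨h1, h2⟩; omega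

lemma bernardi_hasSum_E (γ : ℝ) (hγ0 : 0 ≤ γ) (k : ℕ) (z : ℂ) (hz : ‖z‖ < 1) :
    HasSum (fun n => (bernardiE γ n k : ℂ) * z ^ n) ((z / (1 + (γ:ℂ) - γ * z))^k) := by
  have hγ1C : ((1:ℝ) + γ : ℝ) > 0 := by linarith
  have h1γ : ((1 + γ : ℝ) : ℂ) ≠ 0 := by
    exact_mod_cast Complex.ofReal_ne_zero.mpr (ne_of_gt hγ1C)
  have h1γ' : (1 + (γ:ℂ)) ≠ 0 := by
    intro h
    apply h1γ
    push_cast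
    rw [← h]
  rcases Nat.eq_zero_or_pos k with rfl | hk
  · -- k = 0
    have : HasSum (fun n => (bernardiE γ n 0 : ℂ) * z ^ n) ((bernardiE γ 0 0 : ℂ) * z ^ 0) := by
      apply hasSum_single
      intro n hn
      rw [show bernardiE γ n 0 = 0 from by rw [bernardiE]; simp [hn]]
      norm_num
    convert this using 1
    · rw [pow_zero]
      rw [show bernardiE γ 0 0 = 1 by rw [bernardiE]; norm_num]
      norm_num
  · -- k ≥ 1
    have hk1 : 1 ≤ k := hk
    set w : ℂ := (γ:ℂ)/(1+γ:ℝ) * z with hw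
    have hwn : ‖w‖ < 1 := by
      rw [hw, norm_mul, norm_div]
      have h1 : ‖(γ:ℂ)‖ = γ := by rw [Complex.norm_real, Real.norm_eq_abs, _root_.abs_of_nonneg hγ0]
      have h2 : ‖((1+γ:ℝ):ℂ)‖ = 1+γ := by
        rw [Complex.norm_real, Real.norm_eq_abs, abs_of_pos hγ1C]
      rw [h1, h2]
      have hle : γ / (1+γ) ≤ 1 := by
        rw [div_le_one hγ1C]; linarith
      calc γ / (1 + γ) * ‖z‖ ≤ 1 * ‖z‖ := by
            apply mul_le_mul_of_nonneg_right hle (norm_nonneg z)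
        _ = ‖z‖ := one_mul _
        _ < 1 := hz
    have hbase := hasSum_choose_mul_geometric_of_norm_lt_one (k-1) hwn
    have hkk : (k-1) + 1 = k := Nat.succ_pred_eq_of_pos hk
    rw [hkk] at hbase
    set c : ℂ := z^k / ((1+γ:ℝ):ℂ)^k with hc
    have hmul := hbase.mul_left c
    have h1w : (1:ℂ) - w ≠ 0 := by
      intro h
      rw [sub_eq_zero] at h
      have : ‖(1:ℂ)‖ = ‖w‖ := by rw [h]
      rw [norm_one] at this
      linarith
    have hD : (1 + (γ:ℂ) - γ * z) ≠ 0 := by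
      have hfact : ((1+γ:ℝ):ℂ) * (1 - w) = 1 + (γ:ℂ) - γ * z := by
        rw [hw]
        push_cast
        field_simp
      intro h
      rw [← hfact] at h
      rcases mul_eq_zero.mp h with h' | h'
      · exact h1γ h'
      · exact h1w h'
    have hval : c * (1 / (1-w)^k) = (z / (1 + (γ:ℂ) - γ * z))^k := by
      have hfact : ((1+γ:ℝ):ℂ) * (1 - w) = 1 + (γ:ℂ) - γ * z := by
        rw [hw]; push_cast; field_simp
      rw [hc, div_pow, ← hfact, mul_pow]
      field_simp
    rw [hval] at hmul
    -- now reindex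
    set F : ℕ → ℂ := fun m => (bernardiE γ m k : ℂ) * z ^ m with hF
    have hinj : Function.Injective (fun n : ℕ => n + k) := add_left_injective k
    have hvan : ∀ m ∉ Set.range (fun n : ℕ => n + k), F m = 0 := by
      intro m hm
      rcases Nat.lt_or_ge m k with hlt | hge
      · rw [hF]
        simp only
        rw [bernardiE_eq_zero_of_lt hlt]
        norm_num
      · exact absurd ⟨m - k, show m - k + k = m by omega⟩ hm
    apply (hinj.hasSum_iff hvan).mp
    convert hmul using 1
    · rfl
    funext n
    simp only [Function.comp_apply, hF]
    have hEval : bernardiE γ (n + k) k = ((n + k - 1).choose (k-1) : ℝ) * γ^n / (1+γ)^(n+k) := by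
      rw [bernardiE, if_pos ⟨hk1, Nat.le_add_left k n⟩, show n + k - k = n by omega]
    rw [hEval, hc, hw]
    have hchoose : (n + k - 1).choose (k - 1) = (n + (k-1)).choose (k-1) := by
      congr 1
      omega
    rw [hchoose]
    push_cast
    rw [mul_pow, div_pow]
    field_simp
    ring

lemma bernardi_hasSum_E_real (γ : ℝ) (hγ0 : 0 ≤ γ) (k : ℕ) (x : ℝ) (hx0 : 0 ≤ x) (hx : x < 1) :
    HasSum (fun n => bernardiE γ n k * x ^ n) ((x / (1 + γ - γ * x))^k) := by
  have h := bernardi_hasSum_E γ hγ0 k (x:ℂ)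
    (by rwa [Complex.norm_real, Real.norm_eq_abs, _root_.abs_of_nonneg hx0])
  rw [← Complex.hasSum_ofReal]
  convert h using 1
  · funext n; push_cast; ring
  · push_cast; ring

lemma bernardi_hasSum_E_k (γ : ℝ) (hγ0 : 0 ≤ γ) {n : ℕ} (hn : 1 ≤ n) :
    HasSum (fun k => bernardiE γ n k) (1/(1+γ)) := by
  have hpos : (0:ℝ) < 1 + γ := by linarith
  have hfin : HasSum (fun k => bernardiE γ n k) (∑ k ∈ Finset.range (n+1), bernardiE γ n k) := by
    apply hasSum_sum_of_ne_finset_zero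
    intro k hk
    rw [Finset.mem_range] at hk
    exact bernardiE_eq_zero_of_lt (by omega)
  have hsum : ∑ k ∈ Finset.range (n+1), bernardiE γ n k = 1/(1+γ) := by
    rw [Finset.sum_range_succ']
    have hf0 : bernardiE γ n 0 = 0 := by
      rw [bernardiE, if_neg (by omega), if_neg (by omega)]
    rw [hf0, add_zero]
    have hterm : ∀ j ∈ Finset.range n, bernardiE γ n (j+1)
        = (1:ℝ) ^ j * γ ^ (n - 1 - j) * (((n-1).choose j : ℕ) : ℝ) / (1+γ)^n := by
      intro j hj
      rw [Finset.mem_range] at hj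
      rw [bernardiE, if_pos ⟨Nat.le_add_left 1 j, by omega⟩]
      simp only [Nat.add_sub_cancel]
      rw [show n - (j+1) = n - 1 - j by omega]
      ring
    rw [Finset.sum_congr rfl hterm, ← Finset.sum_div]
    have hbin := add_pow (1:ℝ) γ (n-1)
    rw [show n - 1 + 1 = n by omega] at hbin
    rw [← hbin]
    have hpow : (1+γ)^n = (1+γ)^(n-1) * (1+γ) := by
      rw [← pow_succ, show n - 1 + 1 = n by omega]
    rw [hpow]
    rw [div_eq_div_iff (by positivity) (by positivity)]
    ring
  rwa [hsum] at hfin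

lemma bernardiE_zero {γ : ℝ} {n : ℕ} (h : 1 ≤ n) : bernardiE γ n 0 = 0 := by
  rw [bernardiE, if_neg (by omega), if_neg (by omega)]




lemma bernardi_coeff_schur {G : ℂ → ℂ} {d : ℕ → ℂ} (hG : DifferentiableOn ℂ G (ball 0 1))
    (hGb : ∀ z ∈ ball (0:ℂ) 1, ‖G z‖ ≤ 1)
    (hd : ∀ z ∈ ball (0:ℂ) 1, HasSum (fun m => d m * z ^ m) (G z))
    (k : ℕ) (hk : 1 ≤ k) :
    ‖d k‖ ≤ 1 - ‖d 0‖ ^ 2 := by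
  have hk0 : k ≠ 0 := Nat.one_le_iff_ne_zero.mp hk
  have hkC : (k:ℂ) ≠ 0 := Nat.cast_ne_zero.mpr hk0
  have hd1 : ∀ m, ‖d m‖ ≤ 1 := bernardi_bounded_coeff hG hGb hd
  set q : FormalMultilinearSeries ℂ ℂ ℂ :=
    FormalMultilinearSeries.ofScalars ℂ (fun m => d (k * m)) with hq
  have hqn : ∀ n, ‖q n‖ ≤ 1 := by
    intro n
    rw [hq, FormalMultilinearSeries.ofScalars_norm]
    exact hd1 (k * n)
  have hrad : 1 ≤ q.radius := by
    apply ENNReal.le_of_forall_nnreal_lt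
    intro r hr
    apply q.le_radius_of_bound 1
    intro n
    have hr1 : (r:ℝ) ≤ 1 := by
      rw [ENNReal.coe_lt_one_iff] at hr
      exact_mod_cast hr.le
    calc ‖q n‖ * (r:ℝ) ^ n ≤ 1 * 1 ^ n :=
      mul_le_mul (hqn n) (pow_le_pow_left₀ (by positivity) hr1 n) (by positivity) one_pos.le
    _ = 1 := by norm_num
  have hq0 : 0 < q.radius := lt_of_lt_of_le one_pos hrad
  have hCps : HasFPowerSeriesOnBall q.sum q 0 q.radius := q.hasFPowerSeriesOnBall hq0
  set C : ℂ → ℂ := q.sum with hCdef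
  have hsub : ball (0:ℂ) 1 ⊆ Metric.eball (0:ℂ) q.radius := by
    intro z hz
    rw [mem_ball_zero_iff] at hz
    rw [mem_eball_zero_iff]
    calc (‖z‖₊ : ℝ≥0∞) < 1 := by
          rw [ENNReal.coe_lt_one_iff, ← NNReal.coe_lt_one]
          exact hz
      _ ≤ q.radius := hrad
  have hCdiff : DifferentiableOn ℂ C (ball 0 1) := hCps.differentiableOn.mono hsub
  have hCsum : ∀ v ∈ ball (0:ℂ) 1, HasSum (fun n => d (k*n) * v^n) (C v) := by
    intro v hv
    have := hCps.hasSum (hsub hv)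
    rw [zero_add] at this
    convert this using 2 with n
    · rfl
    rw [hq, FormalMultilinearSeries.ofScalars_apply_eq, smul_eq_mul]
  have hCb : ∀ v ∈ ball (0:ℂ) 1, ‖C v‖ ≤ 1 := by
    intro v hv
    rw [mem_ball_zero_iff] at hv
    -- find k-th root of v
    obtain ⟨u, hu, hul⟩ : ∃ u : ℂ, u ^ k = v ∧ ‖u‖ < 1 := by
      rcases eq_or_ne v 0 with rfl | hv0
      · exact ⟨0, by rw [zero_pow hk0], by norm_num⟩
      · refine ⟨Complex.exp ((k:ℂ)⁻¹ * Complex.log v), ?_, ?_⟩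
        · rw [← Complex.exp_nat_mul, ← mul_assoc, mul_inv_cancel₀ hkC, one_mul,
            Complex.exp_log hv0]
        · rw [Complex.norm_exp]
          rw [show ((k:ℂ)⁻¹ : ℂ) = (((k:ℝ)⁻¹ : ℝ) : ℂ) by push_cast; ring]
          rw [Complex.re_ofReal_mul, Complex.log_re]
          rw [Real.exp_lt_one_iff]
          have hv0' : 0 < ‖v‖ := norm_pos_iff.mpr hv0
          have : Real.log (‖v‖) < 0 := Real.log_neg hv0' hv
          have hkinv : (0:ℝ) < (k:ℝ)⁻¹ := by positivity
          calc (k:ℝ)⁻¹ * Real.log (‖v‖) < (k:ℝ)⁻¹ * 0 :=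
            (mul_lt_mul_iff_right₀ hkinv).2 this
          _ = 0 := mul_zero _
    set ζ : ℂ := Complex.exp (2 * (π:ℝ) * I / k) with hζdef
    have hζ : IsPrimitiveRoot ζ k := Complex.isPrimitiveRoot_exp k hk0
    have habsζ : ‖ζ‖ = 1 := by
      rw [hζdef, show (2 * (π:ℝ) * I / k : ℂ) = ((2 * π / k : ℝ) : ℂ) * I by push_cast; ring,
        Complex.norm_exp_ofReal_mul_I]
    have hmem : ∀ j : ℕ, ζ ^ j * u ∈ ball (0:ℂ) 1 := by
      intro j
      rw [mem_ball_zero_iff, norm_mul, norm_pow, habsζ, one_pow, one_mul]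
      exact hul
    set S : ℂ := ∑ j ∈ Finset.range k, (k:ℂ)⁻¹ * G (ζ^j * u) with hSdef
    have havg : HasSum (fun m => ∑ j ∈ Finset.range k, (k:ℂ)⁻¹ * (d m * (ζ^j*u)^m)) S := by
      apply hasSum_sum
      intro j _
      exact (hd _ (hmem j)).mul_left _
    have hterm : ∀ m, (∑ j ∈ Finset.range k, (k:ℂ)⁻¹ * (d m * (ζ^j*u)^m))
        = if k ∣ m then d m * u^m else 0 := by
      intro m
      have hsplit : ∀ j, (k:ℂ)⁻¹ * (d m * (ζ^j*u)^m)
          = ((k:ℂ)⁻¹ * (d m * u^m)) * (ζ^m)^j := by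
        intro j
        rw [mul_pow, ← pow_mul, mul_comm j m, pow_mul]
        ring
      simp only [hsplit, ← Finset.mul_sum]
      by_cases hdvd : ζ ^ m = 1
      · rw [Finset.sum_congr rfl (fun j _ => by rw [hdvd, one_pow])]
        rw [Finset.sum_const, Finset.card_range, nsmul_eq_mul, mul_one]
        rw [if_pos ((hζ.pow_eq_one_iff_dvd m).mp hdvd)]
        field_simp
      · rw [geom_sum_eq hdvd k]
        have hζk : (ζ ^ m) ^ k = 1 := by
          rw [← pow_mul, mul_comm m k, pow_mul, hζ.pow_eq_one, one_pow]
        rw [hζk, sub_self, zero_div, mul_zero,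
          if_neg (fun hc => hdvd ((hζ.pow_eq_one_iff_dvd m).mpr hc))]
    rw [funext hterm] at havg
    have hinj : Function.Injective (fun n : ℕ => k * n) := fun a b h => by
      exact Nat.eq_of_mul_eq_mul_left (Nat.pos_of_ne_zero hk0) h
    have hvan : ∀ x ∉ Set.range (fun n : ℕ => k * n),
        (if k ∣ x then d x * u^x else 0) = 0 := by
      intro x hx
      rw [if_neg]
      intro ⟨c, hc⟩
      exact hx ⟨c, hc.symm⟩
    have hcomp := (hinj.hasSum_iff hvan).mpr havg
    have hCveq : HasSum (fun m => d (k*m) * v^m) S := by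
      convert hcomp using 2 with m
      simp only [Function.comp_apply]
      rw [if_pos (dvd_mul_right k m), ← hu, ← pow_mul]
    have hCv : C v = S := (hCsum v (mem_ball_zero_iff.mpr hv)).unique hCveq
    rw [hCv, hSdef]
    calc ‖∑ j ∈ Finset.range k, (k:ℂ)⁻¹ * G (ζ^j * u)‖
        ≤ ∑ j ∈ Finset.range k, ‖(k:ℂ)⁻¹ * G (ζ^j * u)‖ := by
          simpa using
            norm_sum_le (Finset.range k) (fun j => (k:ℂ)⁻¹ * G (ζ^j * u))
      _ ≤ ∑ _j ∈ Finset.range k, (k:ℝ)⁻¹ := by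
          apply Finset.sum_le_sum
          intro j _
          rw [norm_mul, norm_inv, Complex.norm_natCast]
          calc (k:ℝ)⁻¹ * ‖G (ζ^j * u)‖ ≤ (k:ℝ)⁻¹ * 1 := by
                apply mul_le_mul_of_nonneg_left (hGb _ (hmem j)) (by positivity)
            _ = (k:ℝ)⁻¹ := mul_one _
      _ = 1 := by
          rw [Finset.sum_const, Finset.card_range, nsmul_eq_mul]
          field_simp
  have hC0 : C 0 = d 0 := by
    have h1 := hCsum 0 (mem_ball_self one_pos)
    have h2 : HasSum (fun n => d (k*n) * (0:ℂ)^n) (d (k*0) * (0:ℂ)^0) := by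
      apply hasSum_single
      intro m hm
      rw [zero_pow hm, mul_zero]
    have := h1.unique h2
    simpa using this
  have hderiv : deriv C 0 = d k := by
    have := hCps.hasFPowerSeriesAt.deriv
    rw [this, hq, FormalMultilinearSeries.ofScalars_apply_eq, smul_eq_mul]
    norm_num
  have := bernardi_schwarz_pick hCdiff hCb
  rwa [hderiv, hC0] at this




lemma bernardi_main_coeff {γ : ℝ} (hγ0 : 0 ≤ γ) (hγ1 : γ < 1)
    {f : ℂ → ℂ} {a : ℕ → ℂ}
    (hf : AnalyticOn ℂ f (ball (-(γ / (1 - γ)) : ℂ) (1 / (1 - γ))))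
    (hb : ∀ z ∈ ball (-(γ / (1 - γ)) : ℂ) (1 / (1 - γ)), ‖f z‖ ≤ 1)
    (hs : ∀ z ∈ ball (0 : ℂ) 1, HasSum (fun n : ℕ => a n * z ^ n) (f z)) :
    ‖a 0‖ ≤ 1 ∧
      ∀ n, 1 ≤ n → ‖a n‖ ≤ (1 - ‖a 0‖ ^ 2) / (1 + γ) := by
  have h1γpos : (0:ℝ) < 1 - γ := by linarith
  have h1γaddpos : (0:ℝ) < 1 + γ := by linarith
  have h1γC : ((1:ℂ) - γ) ≠ 0 := by
    intro h
    have : ((1 - γ : ℝ) : ℂ) = 0 := by push_cast; rw [← h]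
    exact (ne_of_gt h1γpos) (by exact_mod_cast this)
  have h1γaddC : ((1:ℂ) + γ) ≠ 0 := by
    intro h
    have : ((1 + γ : ℝ) : ℂ) = 0 := by push_cast; rw [← h]
    exact (ne_of_gt h1γaddpos) (by exact_mod_cast this)
  -- unit ball is contained in Ω
  have hsub : ball (0:ℂ) 1 ⊆ ball (-(γ / (1 - γ)) : ℂ) (1 / (1 - γ)) := by
    intro z hz
    rw [mem_ball_zero_iff] at hz
    rw [mem_ball, dist_eq, sub_neg_eq_add]
    have habsγ : ‖(γ:ℂ) / (1 - γ)‖ = γ / (1 - γ) := by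
      rw [show ((γ:ℂ) / (1 - γ)) = (((γ / (1-γ) : ℝ)) : ℂ) by push_cast; ring,
        Complex.norm_real, Real.norm_eq_abs, _root_.abs_of_nonneg (by positivity)]
    calc ‖z + (γ:ℂ)/(1-γ)‖ ≤ ‖z‖ + ‖(γ:ℂ)/(1-γ)‖ :=
          norm_add_le _ _
      _ < 1 + γ/(1-γ) := by
          rw [habsγ]
          linarith
      _ = 1/(1-γ) := by field_simp; ring
  -- a 0 = f 0 and |a 0| ≤ 1
  have ha0 : a 0 = f 0 := by
    have h1 := hs 0 (mem_ball_self one_pos)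
    have h2 : HasSum (fun n => a n * (0:ℂ)^n) (a 0 * (0:ℂ)^0) := by
      apply hasSum_single
      intro m hm
      rw [zero_pow hm, mul_zero]
    have := h2.unique h1
    simpa using this
  have habs0 : ‖a 0‖ ≤ 1 := by
    rw [ha0]
    exact hb 0 (hsub (mem_ball_self one_pos))
  have hsq : (0:ℝ) ≤ 1 - ‖a 0‖ ^ 2 := by nlinarith [norm_nonneg (a 0)]
  -- the Möbius map ψ
  set ψ : ℂ → ℂ := fun u => (1 + (γ:ℂ)) * u / (1 + γ * u) with hψdef
  have hkey : ∀ u : ℂ, ‖u‖ < 1 →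
      ‖u + γ‖ < ‖1 + γ * u‖ := by
    intro u hu
    have h := bernardi_normSq_aux (-(γ:ℂ)) u
    rw [show (starRingEnd ℂ) (-(γ:ℂ)) = -(γ:ℂ) by rw [map_neg, Complex.conj_ofReal]] at h
    rw [show (1 : ℂ) - -(γ:ℂ) * u = 1 + γ * u by ring, show u - -(γ:ℂ) = u + γ by ring] at h
    have hnγ : Complex.normSq (-(γ:ℂ)) = γ^2 := by
      rw [Complex.normSq_neg, Complex.normSq_ofReal]; ring
    rw [hnγ] at h
    have huSq : Complex.normSq u < 1 := by
      rw [Complex.normSq_eq_norm_sq]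
      nlinarith [norm_nonneg u]
    have hγSq : γ^2 < 1 := by nlinarith
    have hlt : Complex.normSq (u + γ) < Complex.normSq (1 + γ * u) := by nlinarith
    rw [Complex.norm_def, Complex.norm_def]
    exact Real.sqrt_lt_sqrt (Complex.normSq_nonneg _) hlt
  have hne : ∀ u : ℂ, ‖u‖ < 1 → (1 + (γ:ℂ) * u) ≠ 0 := by
    intro u hu h
    have := hkey u hu
    rw [h, norm_zero] at this
    exact absurd this (not_lt.mpr (norm_nonneg _))
  have hψmem : ∀ u ∈ ball (0:ℂ) 1, ψ u ∈ ball (-(γ / (1 - γ)) : ℂ) (1 / (1 - γ)) := by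
    intro u hu
    rw [mem_ball_zero_iff] at hu
    rw [mem_ball, dist_eq, sub_neg_eq_add]
    have heq : ψ u + (γ:ℂ)/(1-γ) = (u + γ) / ((1-(γ:ℂ)) * (1 + γ*u)) := by
      rw [hψdef]
      field_simp [hne u hu]
      ring
    rw [heq, norm_div, norm_mul]
    have habs1γ : ‖1-(γ:ℂ)‖ = 1 - γ := by
      rw [show ((1:ℂ) - γ) = (((1 - γ : ℝ)) : ℂ) by push_cast; ring,
        Complex.norm_real, Real.norm_eq_abs, _root_.abs_of_pos h1γpos]
    rw [habs1γ]
    have habspos : 0 < ‖1 + (γ:ℂ)*u‖ := norm_pos_iff.mpr (hne u hu)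
    rw [div_lt_div_iff₀ (by positivity) h1γpos]
    calc ‖u + γ‖ * (1-γ)
        < ‖1 + (γ:ℂ)*u‖ * (1-γ) :=
          mul_lt_mul_of_pos_right (hkey u hu) h1γpos
      _ = 1 * ((1-γ) * ‖1 + (γ:ℂ)*u‖) := by ring
  have hψdiff : DifferentiableOn ℂ ψ (ball (0:ℂ) 1) := by
    apply DifferentiableOn.div
    · exact (differentiableOn_const _).mul differentiableOn_id
    · exact (differentiableOn_const _).add ((differentiableOn_const _).mul differentiableOn_id)
    · intro u hu
      exact hne u (mem_ball_zero_iff.mp hu)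
  set G : ℂ → ℂ := f ∘ ψ with hGdef
  have hGdiff : DifferentiableOn ℂ G (ball (0:ℂ) 1) :=
    (hf.differentiableOn).comp hψdiff hψmem
  have hGb : ∀ z ∈ ball (0:ℂ) 1, ‖G z‖ ≤ 1 := fun z hz => hb _ (hψmem z hz)
  obtain ⟨d, hd⟩ := bernardi_exists_coeffs hGdiff
  have hd1 : ∀ m, ‖d m‖ ≤ 1 := bernardi_bounded_coeff hGdiff hGb hd
  have hψ0 : ψ 0 = 0 := by rw [hψdef]; simp
  have hd0 : d 0 = a 0 := by
    have h1 := hd 0 (mem_ball_self one_pos)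
    have h2 : HasSum (fun m => d m * (0:ℂ)^m) (d 0 * (0:ℂ)^0) := by
      apply hasSum_single
      intro m hm
      rw [zero_pow hm, mul_zero]
    have h3 := h2.unique h1
    have h4 : G 0 = f 0 := by rw [hGdef, Function.comp_apply, hψ0]
    rw [ha0, ← h4]
    simpa using h3
  have hdk : ∀ k, 1 ≤ k → ‖d k‖ ≤ 1 - ‖a 0‖ ^ 2 := by
    intro k hk
    have := bernardi_coeff_schur hGdiff hGb hd k hk
    rwa [hd0] at this
  set A : ℕ → ℂ := fun n => ∑' k, d k * (bernardiE γ n k : ℂ) with hA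
  have hAsum : ∀ z ∈ ball (0:ℂ) 1, HasSum (fun n => A n * z ^ n) (f z) := by
    intro z hzmem
    have hz : ‖z‖ < 1 := mem_ball_zero_iff.mp hzmem
    set D : ℂ := 1 + (γ:ℂ) - γ * z with hDdef
    have hDn : 1 ≤ ‖D‖ := by
      have h1 : ‖(1 + (γ:ℂ))‖ = 1 + γ := by
        rw [show (1 + (γ:ℂ)) = (((1 + γ : ℝ)) : ℂ) by push_cast; ring]
        rw [Complex.norm_real, Real.norm_eq_abs, _root_.abs_of_pos h1γaddpos]
      have h2 : ‖(γ:ℂ) * z‖ ≤ γ := by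
        rw [norm_mul, Complex.norm_real, Real.norm_eq_abs,
          _root_.abs_of_nonneg hγ0]
        calc γ * ‖z‖ ≤ γ * 1 := mul_le_mul_of_nonneg_left hz.le hγ0
          _ = γ := mul_one γ
      calc (1:ℝ) = (1 + γ) - γ := by ring
        _ ≤ ‖(1 + (γ:ℂ))‖ - ‖(γ:ℂ) * z‖ := by rw [h1]; linarith
        _ ≤ ‖(1 + (γ:ℂ)) - (γ:ℂ) * z‖ := norm_sub_norm_le _ _
        _ = ‖D‖ := by rw [hDdef]
    have hDne : D ≠ 0 := by
      intro h
      rw [h, norm_zero] at hDn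
      linarith
    have hφn : ‖z / D‖ < 1 := by
      rw [norm_div]
      calc ‖z‖ / ‖D‖ ≤ ‖z‖ / 1 := by
            apply div_le_div_of_nonneg_left (norm_nonneg z) one_pos hDn
        _ = ‖z‖ := div_one _
        _ < 1 := hz
    have hφmem : z / D ∈ ball (0:ℂ) 1 := mem_ball_zero_iff.mpr hφn
    have hψφ : ψ (z / D) = z := by
      rw [hψdef]
      simp only
      rw [div_eq_iff (hne _ hφn), hDdef]
      field_simp [show (1 + (γ:ℂ) - γ * z) ≠ 0 from hDne]
      ring
    have hGsum : HasSum (fun k => d k * (z/D)^k) (f z) := by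
      have h1 := hd (z/D) hφmem
      rwa [hGdef, Function.comp_apply, hψφ] at h1
    have hEc : ∀ k, HasSum (fun n => (bernardiE γ n k : ℂ) * z^n) ((z/D)^k) := by
      intro k
      have := bernardi_hasSum_E γ hγ0 k z hz
      rwa [← hDdef] at this
    set F : ℕ × ℕ → ℂ := fun p => d p.1 * (bernardiE γ p.2 p.1 : ℂ) * z ^ p.2 with hF
    set x : ℝ := ‖z‖ with hx
    have hx0 : 0 ≤ x := norm_nonneg z
    have hρden : (1:ℝ) ≤ 1 + γ - γ * x := by nlinarith
    have hρ1 : x / (1 + γ - γ * x) < 1 := by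
      rw [div_lt_one (by linarith)]
      nlinarith
    have hρ0 : 0 ≤ x / (1 + γ - γ * x) := by positivity
    have hg : Summable (fun p : ℕ×ℕ => bernardiE γ p.2 p.1 * x ^ p.2) := by
      apply (summable_prod_of_nonneg ?_).2
      constructor
      · intro k
        exact (bernardi_hasSum_E_real γ hγ0 k x hx0 hz).summable
      · have heq : (fun k => ∑' n, bernardiE γ n k * x ^ n)
            = fun k => (x / (1 + γ - γ * x))^k := by
          funext k
          exact (bernardi_hasSum_E_real γ hγ0 k x hx0 hz).tsum_eq
        rw [heq]
        exact summable_geometric_of_lt_one hρ0 hρ1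
      · intro p
        exact mul_nonneg (bernardiE_nonneg hγ0 _ _) (pow_nonneg hx0 _)
    have hFn : Summable (fun p : ℕ×ℕ => ‖F p‖) := by
      apply Summable.of_nonneg_of_le (fun _ => norm_nonneg _) ?_ hg
      intro p
      rw [hF]
      simp only
      rw [norm_mul, norm_mul, Complex.norm_real, Real.norm_eq_abs,
        _root_.abs_of_nonneg (bernardiE_nonneg hγ0 _ _), norm_pow]
      calc ‖d p.1‖ * bernardiE γ p.2 p.1 * ‖z‖ ^ p.2
          ≤ 1 * bernardiE γ p.2 p.1 * ‖z‖ ^ p.2 := by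
            apply mul_le_mul_of_nonneg_right
            apply mul_le_mul_of_nonneg_right _ (bernardiE_nonneg hγ0 _ _)
            · exact hd1 p.1
            · positivity
        _ = bernardiE γ p.2 p.1 * x ^ p.2 := by rw [hx]; ring
    have hFsummable : Summable F := Summable.of_norm hFn
    have htsum : ∑' p, F p = f z := by
      rw [Summable.tsum_prod hFsummable]
      have hinner : ∀ k, ∑' n, F (k, n) = d k * (z/D)^k := by
        intro k
        have h1 : (fun n => F (k, n)) = fun n => d k * ((bernardiE γ n k : ℂ) * z^n) := by
          funext n
          rw [hF]
          simp only
          ring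
        rw [h1, tsum_mul_left, (hEc k).tsum_eq]
      calc ∑' k, ∑' n, F (k, n) = ∑' k, d k * (z/D)^k := by
            apply tsum_congr hinner
        _ = f z := hGsum.tsum_eq
    have hFs : HasSum F (f z) := htsum ▸ hFsummable.hasSum
    have hFswap : HasSum (F ∘ (Equiv.prodComm ℕ ℕ)) (f z) :=
      ((Equiv.prodComm ℕ ℕ).hasSum_iff).mpr hFs
    have hswapSummable : Summable (F ∘ (Equiv.prodComm ℕ ℕ)) := hFswap.summable
    apply hFswap.prod_fiberwise
    intro n
    have hsl : Summable (fun k => F (k, n)) := by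
      have := hswapSummable.prod_factor n
      exact this
    have h2 : ∑' k, F (k, n) = A n * z^n := by
      rw [show (fun k => F (k, n)) = fun k => (d k * (bernardiE γ n k : ℂ)) * z^n from rfl]
      rw [tsum_mul_right, hA]
    have h1 := hsl.hasSum
    rwa [h2] at h1
  have haA : a = A := bernardi_coeff_unique hs hAsum
  refine ⟨habs0, ?_⟩
  intro n hn
  rw [show a n = A n from congrFun haA n]
  have hsl : Summable (fun k => ‖d k * (bernardiE γ n k : ℂ)‖) := by
    apply Summable.of_nonneg_of_le (fun _ => norm_nonneg _) ?_
      ((bernardi_hasSum_E_k γ hγ0 hn).summable)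
    intro k
    rw [norm_mul, Complex.norm_real, Real.norm_eq_abs,
      _root_.abs_of_nonneg (bernardiE_nonneg hγ0 _ _)]
    calc ‖d k‖ * bernardiE γ n k ≤ 1 * bernardiE γ n k := by
          apply mul_le_mul_of_nonneg_right _ (bernardiE_nonneg hγ0 _ _)
          exact hd1 k
      _ = bernardiE γ n k := one_mul _
  have hrhs : Summable (fun k => (1 - ‖a 0‖ ^ 2) * bernardiE γ n k) :=
    (bernardi_hasSum_E_k γ hγ0 hn).summable.mul_left _
  calc ‖A n‖ ≤ ∑' k, ‖d k * (bernardiE γ n k : ℂ)‖ := by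
        rw [hA]
        exact norm_tsum_le_tsum_norm hsl
    _ ≤ ∑' k, (1 - ‖a 0‖ ^ 2) * bernardiE γ n k := by
        apply Summable.tsum_le_tsum _ hsl hrhs
        intro k
        rw [norm_mul, Complex.norm_real, Real.norm_eq_abs,
          _root_.abs_of_nonneg (bernardiE_nonneg hγ0 _ _)]
        rcases Nat.eq_zero_or_pos k with rfl | hk
        · rw [bernardiE_zero hn, mul_zero, mul_zero]
        · apply mul_le_mul_of_nonneg_right _ (bernardiE_nonneg hγ0 _ _)
          exact hdk k hk
    _ = (1 - ‖a 0‖ ^ 2) * (1/(1+γ)) := by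
        rw [tsum_mul_left, (bernardi_hasSum_E_k γ hγ0 hn).tsum_eq]
    _ = (1 - ‖a 0‖ ^ 2)/(1+γ) := by ring


end BernardiBohrAux

/-- Bohr type inequality for the Bernardi integral operator on `Ω_γ`. -/
theorem bernardi_bohr_on_Omega (γ β R : ℝ) (hγ0 : 0 ≤ γ) (hγ1 : γ < 1) (hβ : 0 < β)
    (f : ℂ → ℂ) (a : ℕ → ℂ)
    (hf : AnalyticOn ℂ f (Metric.ball (-(γ / (1 - γ)) : ℂ) (1 / (1 - γ))))
    (hb : ∀ z ∈ Metric.ball (-(γ / (1 - γ)) : ℂ) (1 / (1 - γ)), ‖f z‖ ≤ 1)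
    (hs : ∀ z ∈ Metric.ball (0 : ℂ) 1, HasSum (fun n : ℕ => a n * z ^ n) (f z))
    (hR : R ∈ Set.Ioo (0 : ℝ) 1)
    (hroot : 1 / β = (2 / (1 + γ)) * ∑' n : ℕ, R ^ (n + 1) / ((n : ℝ) + 1 + β)) :
    ∀ r ∈ Set.Icc (0 : ℝ) R,
      (∑' n : ℕ, ‖a n‖ * r ^ n / ((n : ℝ) + β)) ≤ 1 / β := by
  intro r hr
  obtain ⟨hr0, hrR⟩ := hr
  obtain ⟨hR0, hR1⟩ := hR
  have hr1 : r < 1 := lt_of_le_of_lt hrR hR1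
  have h1γpos : (0:ℝ) < 1 + γ := by linarith
  obtain ⟨habs0, hcoeff⟩ := bernardi_main_coeff hγ0 hγ1 hf hb hs
  set t := ‖a 0‖ with htdef
  have ht0 : 0 ≤ t := norm_nonneg _
  set K := (1 - t^2)/(1+γ) with hKdef
  have hK0 : 0 ≤ K := div_nonneg (by nlinarith) (by linarith)
  have habs_le_one : ∀ n : ℕ, ‖a n‖ ≤ 1 := by
    intro n
    rcases Nat.eq_zero_or_pos n with rfl | hn
    · exact habs0
    · calc ‖a n‖ ≤ (1 - t^2)/(1+γ) := hcoeff n hn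
        _ ≤ 1 := by
          rw [div_le_one h1γpos]
          nlinarith
  have hterm_nonneg : ∀ n : ℕ, 0 ≤ ‖a n‖ * r ^ n / ((n : ℝ) + β) := by
    intro n
    have : (0:ℝ) < (n:ℝ) + β := by positivity
    positivity
  have hterm_le : ∀ n : ℕ, ‖a n‖ * r ^ n / ((n : ℝ) + β) ≤ β⁻¹ * r ^ n := by
    intro n
    have hnb : (0:ℝ) < (n:ℝ) + β := by positivity
    rw [div_le_iff₀ hnb]
    calc ‖a n‖ * r ^ n ≤ 1 * r ^ n :=
          mul_le_mul_of_nonneg_right (habs_le_one n) (by positivity)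
      _ = r ^ n := one_mul _
      _ = β⁻¹ * r ^ n * β := by field_simp
      _ ≤ β⁻¹ * r ^ n * ((n:ℝ) + β) := by
          apply mul_le_mul_of_nonneg_left _ (by positivity)
          linarith [Nat.cast_nonneg (α := ℝ) n]
  have hgeom : Summable (fun n : ℕ => β⁻¹ * r ^ n) :=
    (summable_geometric_of_lt_one hr0 hr1).mul_left _
  have hsum : Summable (fun n : ℕ => ‖a n‖ * r ^ n / ((n : ℝ) + β)) :=
    Summable.of_nonneg_of_le hterm_nonneg hterm_le hgeom
  -- value of the tsum in hroot
  have hSnonneg : ∀ n : ℕ, 0 ≤ R ^ (n+1) / ((n:ℝ) + 1 + β) := by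
    intro n
    have : (0:ℝ) < (n:ℝ) + 1 + β := by positivity
    positivity
  have hSsummable : Summable (fun n : ℕ => R ^ (n+1) / ((n:ℝ) + 1 + β)) := by
    refine Summable.of_nonneg_of_le hSnonneg (fun n => ?_)
      ((summable_geometric_of_lt_one hR0.le hR1).mul_left (β⁻¹ * R))
    have hnb : (0:ℝ) < (n:ℝ) + 1 + β := by positivity
    rw [div_le_iff₀ hnb]
    calc R ^ (n+1) = β⁻¹ * R * R ^ n * β := by rw [pow_succ]; field_simp
      _ ≤ β⁻¹ * R * R ^ n * ((n:ℝ) + 1 + β) := by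
          apply mul_le_mul_of_nonneg_left _ (by positivity)
          linarith [Nat.cast_nonneg (α := ℝ) n]
  have hS : ∑' n : ℕ, R ^ (n+1) / ((n:ℝ) + 1 + β) = (1+γ)/(2*β) := by
    have h1 : (2 / (1+γ)) * ((1+γ)/(2*β)) = 1/β := by field_simp
    have h2 : (0:ℝ) < 2/(1+γ) := by positivity
    have := hroot.symm.trans h1.symm
    exact mul_left_cancel₀ (ne_of_gt h2) this
  -- split the sum
  have hsplit := Summable.tsum_eq_zero_add hsum
  have h0term : ‖a 0‖ * r ^ 0 / (((0:ℕ):ℝ) + β) = t / β := by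
    simp [htdef]
  have htailsum : Summable (fun n : ℕ =>
      ‖a (n+1)‖ * r ^ (n+1) / (((n+1:ℕ):ℝ) + β)) :=
    (summable_nat_add_iff 1).mpr hsum
  have hterm2 : ∀ n : ℕ, ‖a (n+1)‖ * r ^ (n+1) / (((n+1:ℕ):ℝ) + β)
      ≤ K * (R ^ (n+1) / ((n:ℝ) + 1 + β)) := by
    intro n
    have hden : (((n+1:ℕ)):ℝ) + β = (n:ℝ) + 1 + β := by push_cast; ring
    have h3 : (0:ℝ) < (n:ℝ) + 1 + β := by positivity
    have h1 : ‖a (n+1)‖ ≤ K := hcoeff (n+1) (Nat.le_add_left 1 n)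
    have h2 : r ^ (n+1) ≤ R ^ (n+1) := pow_le_pow_left₀ hr0 hrR (n+1)
    rw [hden, ← mul_div_assoc, div_le_div_iff₀ h3 h3]
    apply mul_le_mul_of_nonneg_right _ h3.le
    exact mul_le_mul h1 h2 (by positivity) hK0
  have htail_le : ∑' n : ℕ, ‖a (n+1)‖ * r ^ (n+1) / (((n+1:ℕ):ℝ) + β)
      ≤ K * ((1+γ)/(2*β)) := by
    calc ∑' n : ℕ, ‖a (n+1)‖ * r ^ (n+1) / (((n+1:ℕ):ℝ) + β)
        ≤ ∑' n : ℕ, K * (R ^ (n+1) / ((n:ℝ) + 1 + β)) :=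
          Summable.tsum_le_tsum hterm2 htailsum (hSsummable.mul_left K)
      _ = K * ∑' n : ℕ, R ^ (n+1) / ((n:ℝ) + 1 + β) := by rw [tsum_mul_left]
      _ = K * ((1+γ)/(2*β)) := by rw [hS]
  have hfinal : t/β + K * ((1+γ)/(2*β)) ≤ 1/β := by
    rw [hKdef]
    rw [show (1 - t^2)/(1+γ) * ((1+γ)/(2*β)) = (1-t^2)/(2*β) by field_simp]
    rw [show t/β + (1-t^2)/(2*β) = (2*t + (1-t^2))/(2*β) by field_simp]
    rw [div_le_div_iff₀ (by positivity) hβ]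
    nlinarith [sq_nonneg (t-1)]
  calc (∑' n : ℕ, ‖a n‖ * r ^ n / ((n : ℝ) + β))
      = ‖a 0‖ * r ^ 0 / (((0:ℕ):ℝ) + β)
        + ∑' n : ℕ, ‖a (n+1)‖ * r ^ (n+1) / (((n+1:ℕ):ℝ) + β) := hsplit
    _ = t/β + ∑' n : ℕ, ‖a (n+1)‖ * r ^ (n+1) / (((n+1:ℕ):ℝ) + β) := by
        rw [h0term]
    _ ≤ t/β + K * ((1+γ)/(2*β)) := by linarith [htail_le]
    _ ≤ 1/β := hfinal
end

section
/- If f(z) = Σ_{n≥0} a_n z^n is analytic on the unit disk with |f(z)| ≤ 1, then for r ∈ (0,1), Σ_{n≥0} (1/(n+1))|Σ_{k=0}^n a_k| r^n ≤ (1/r) log(1/(1-r)). -/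
open MeasureTheory Filter Finset AddCircle

local instance : Fact (0 < 2 * Real.pi) := ⟨by positivity⟩

noncomputable section
namespace CesaroAux

abbrev T : ℝ := 2 * Real.pi

lemma norm_fourier_apply (k : ℤ) (x : AddCircle T) : ‖(fourier k x : ℂ)‖ = 1 :=
  Circle.norm_coe _

lemma fourier_natCast_pow (n : ℕ) (x : AddCircle T) :
    fourier (n : ℤ) x = (fourier 1 x : ℂ) ^ n := by
  induction n with
  | zero => simp [fourier_zero]
  | succ m ih =>
      push_cast
      rw [fourier_add, ih, pow_succ, mul_comm]

lemma integral_fourier_eq_zero {k : ℤ} (hk : k ≠ 0) :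
    ∫ x : AddCircle T, fourier k x ∂haarAddCircle = 0 :=
  integral_eq_zero_of_add_right_eq_neg
    (fourier_add_half_inv_index hk (by positivity))

lemma integral_fourier (k : ℤ) :
    ∫ x : AddCircle T, fourier k x ∂haarAddCircle = if k = 0 then 1 else 0 := by
  split_ifs with h
  · subst h
    simp only [fourier_zero]
    simp [measure_univ]
  · exact integral_fourier_eq_zero h

lemma continuous_sum (c : ℕ → ℂ) (hc : Summable fun n => ‖c n‖)
    (F : AddCircle T → ℂ)
    (hF : ∀ x, HasSum (fun n : ℕ => c n * fourier n x) (F x)) :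
    Continuous F := by
  have hsum : Summable fun n : ℕ => c n • (fourier (n : ℤ) : C(AddCircle T, ℂ)) := by
    apply Summable.of_norm
    simpa [norm_smul, fourier_norm] using hc
  have hS := hsum.hasSum
  have : F = ⇑(∑' n : ℕ, c n • (fourier (n : ℤ) : C(AddCircle T, ℂ))) := by
    funext x
    have h2 := (ContinuousMap.evalCLM ℂ x).hasSum hS
    simp only [ContinuousMap.evalCLM, ContinuousLinearMap.coe_mk', LinearMap.coe_mk,
      AddHom.coe_mk] at h2
    have h3 : HasSum (fun n : ℕ => c n * fourier n x)
        ((∑' n : ℕ, c n • (fourier (n : ℤ) : C(AddCircle T, ℂ))) x) := by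
      simpa using h2
    exact (hF x).unique h3
  rw [this]
  exact ContinuousMap.continuous _

lemma fourierCoeff_of_hasSum (c : ℕ → ℂ) (hc : Summable fun n => ‖c n‖)
    (F : AddCircle T → ℂ)
    (hF : ∀ x, HasSum (fun n : ℕ => c n * fourier n x) (F x)) (m : ℤ) :
    fourierCoeff F m = if 0 ≤ m then c m.toNat else 0 := by
  have hpt : ∀ x : AddCircle T,
      fourier (-m) x • F x = ∑' n : ℕ, c n * fourier ((n : ℤ) - m) x := by
    intro x
    have h1 : HasSum (fun n : ℕ => fourier (-m) x * (c n * fourier n x))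
        (fourier (-m) x * F x) := (hF x).mul_left _
    have h2 : (fun n : ℕ => fourier (-m) x * (c n * fourier n x))
        = fun n : ℕ => c n * fourier ((n : ℤ) - m) x := by
      funext n
      rw [sub_eq_add_neg, fourier_add]
      ring
    rw [h2] at h1
    rw [smul_eq_mul]
    exact h1.tsum_eq.symm
  rw [fourierCoeff]
  simp_rw [hpt]
  rw [integral_tsum]
  · have h3 : ∀ n : ℕ, (∫ x : AddCircle T, c n * fourier ((n : ℤ) - m) x ∂haarAddCircle)
        = c n * if (n : ℤ) = m then 1 else 0 := by
      intro n
      rw [integral_const_mul, integral_fourier]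
      congr 1
      simp [sub_eq_zero]
    simp_rw [h3]
    by_cases hm : 0 ≤ m
    · rw [if_pos hm]
      rw [tsum_eq_single m.toNat]
      · rw [if_pos (by omega), mul_one]
      · intro n hn
        rw [if_neg (by omega), mul_zero]
    · rw [if_neg hm]
      have : ∀ n : ℕ, c n * (if (n : ℤ) = m then 1 else 0) = 0 := by
        intro n
        rw [if_neg (by omega), mul_zero]
      simp_rw [this]
      exact tsum_zero
  · intro n
    exact (continuous_const.mul (map_continuous (fourier ((n : ℤ) - m)))).aestronglyMeasurable
  · have h4 : ∀ n : ℕ, (∫⁻ x : AddCircle T,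
        ‖c n * fourier ((n : ℤ) - m) x‖₊ ∂haarAddCircle) = (‖c n‖₊ : ENNReal) := by
      intro n
      have heq : ∀ x : AddCircle T,
          (‖c n * fourier ((n : ℤ) - m) x‖₊ : ENNReal) = (‖c n‖₊ : ENNReal) := by
        intro x
        congr 1
        ext
        rw [coe_nnnorm, coe_nnnorm, norm_mul, norm_fourier_apply, mul_one]
      simp_rw [heq]
      rw [lintegral_const, measure_univ, mul_one]
    simp_rw [enorm_eq_nnnorm, h4]
    rw [ENNReal.tsum_coe_ne_top_iff_summable]
    rw [← NNReal.summable_coe]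
    simpa [coe_nnnorm] using hc

lemma parseval_of_hasSum (c : ℕ → ℂ) (hc : Summable fun n => ‖c n‖)
    (F : AddCircle T → ℂ)
    (hF : ∀ x, HasSum (fun n : ℕ => c n * fourier n x) (F x)) :
    ∑' n : ℕ, ‖c n‖ ^ 2 = ∫ x : AddCircle T, ‖F x‖ ^ 2 ∂haarAddCircle := by
  have hcont : Continuous F := continuous_sum c hc F hF
  have hP := tsum_sq_fourierCoeff
    (ContinuousMap.toLp (E := ℂ) 2 haarAddCircle ℂ (⟨F, hcont⟩ : C(AddCircle T, ℂ)))
  have hco : ∀ i : ℤ, fourierCoeff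
      (⇑(ContinuousMap.toLp (E := ℂ) 2 haarAddCircle ℂ (⟨F, hcont⟩ : C(AddCircle T, ℂ)))) i
      = if 0 ≤ i then c i.toNat else 0 := by
    intro i
    rw [fourierCoeff_toLp]
    exact fourierCoeff_of_hasSum c hc F hF i
  simp_rw [hco] at hP
  have hR : (∫ x : AddCircle T,
      ‖(ContinuousMap.toLp (E := ℂ) 2 haarAddCircle ℂ (⟨F, hcont⟩ : C(AddCircle T, ℂ))) x‖ ^ 2
        ∂haarAddCircle) = ∫ x : AddCircle T, ‖F x‖ ^ 2 ∂haarAddCircle := by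
    apply integral_congr_ae
    filter_upwards [ContinuousMap.coeFn_toLp (p := 2) haarAddCircle (𝕜 := ℂ)
      (⟨F, hcont⟩ : C(AddCircle T, ℂ))] with x hx
    rw [hx]
    rfl
  rw [hR] at hP
  rw [← hP]
  have hinj : Function.Injective (Nat.cast : ℕ → ℤ) := Nat.cast_injective
  rw [← hinj.tsum_eq]
  · apply tsum_congr
    intro n
    simp
  · intro i hi
    rcases le_or_gt 0 i with h0 | h0
    · exact ⟨i.toNat, by omega⟩
    · exfalso
      apply hi
      simp only [if_neg (not_le.2 h0)]
      simp


lemma abel_aux (u w : ℕ → ℝ) (hu : ∀ n, 0 ≤ u n) (hw0 : ∀ n, 0 ≤ w n)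
    (hwa : ∀ n, w (n + 1) ≤ w n)
    (h : ∀ N : ℕ, ∑ n ∈ Finset.range N, u n ≤ N) (M : ℕ) :
    ∑ n ∈ Finset.range M, u n * w n ≤ ∑ n ∈ Finset.range M, w n := by
  have key : ∀ M : ℕ, w M * (M - ∑ n ∈ Finset.range M, u n)
      ≤ ∑ n ∈ Finset.range M, (1 - u n) * w n := by
    intro M
    induction M with
    | zero => simp
    | succ M ih =>
        have h1 : (0:ℝ) ≤ (M+1 : ℕ) - ∑ n ∈ Finset.range (M+1), u n :=
          sub_nonneg.2 (h (M+1))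
        have h2 := mul_le_mul_of_nonneg_right (hwa M) h1
        rw [Finset.sum_range_succ] at h1 h2
        rw [Finset.sum_range_succ, Finset.sum_range_succ]
        push_cast at h1 h2 ⊢
        nlinarith [ih, hw0 M]
  have hM := key M
  have h3 : (0:ℝ) ≤ (M:ℝ) - ∑ n ∈ Finset.range M, u n := sub_nonneg.2 (h M)
  have h4 : 0 ≤ w M * ((M:ℝ) - ∑ n ∈ Finset.range M, u n) := mul_nonneg (hw0 M) h3
  have h5 : ∑ n ∈ Finset.range M, (1 - u n) * w n
      = ∑ n ∈ Finset.range M, w n - ∑ n ∈ Finset.range M, u n * w n := by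
    rw [← Finset.sum_sub_distrib]; congr 1; ext n; ring
  linarith

lemma summable_norm_sq {c : ℕ → ℂ} (hc : Summable fun n => ‖c n‖) :
    Summable fun n => ‖c n‖ ^ 2 := by
  have h1 : Tendsto (fun n => ‖c n‖) atTop (nhds 0) := hc.tendsto_atTop_zero
  obtain ⟨C, hC⟩ := h1.bddAbove_range
  refine Summable.of_nonneg_of_le (fun n => sq_nonneg _) (fun n => ?_) (hc.mul_left C)
  have hn : ‖c n‖ ≤ C := hC (Set.mem_range_self n)
  calc ‖c n‖ ^ 2 = ‖c n‖ * ‖c n‖ := sq (‖c n‖) ▸ rfl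
    _ ≤ C * ‖c n‖ := mul_le_mul_of_nonneg_right hn (norm_nonneg _)

lemma step_rho (f : ℂ → ℂ) (a : ℕ → ℂ)
    (hb : ∀ z ∈ Metric.ball (0 : ℂ) 1, ‖f z‖ ≤ 1)
    (hs : ∀ z ∈ Metric.ball (0 : ℂ) 1, HasSum (fun n : ℕ => a n * z ^ n) (f z))
    (ρ : ℝ) (hρ0 : 0 ≤ ρ) (hρ1 : ρ < 1) (N : ℕ) :
    ∑ n ∈ Finset.range (N + 1), ‖∑ k ∈ Finset.range (n + 1), a k‖ ^ 2 * ρ ^ (2 * n)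
      ≤ ∑ k ∈ Finset.range (N + 1), ρ ^ (2 * k) := by
  classical
  set z : AddCircle T → ℂ := fun x => (ρ : ℂ) * fourier 1 x with hzdef
  have hznorm : ∀ x, ‖z x‖ = ρ := by
    intro x
    rw [hzdef]
    simp only [norm_mul, Complex.norm_real, Real.norm_eq_abs]
    rw [norm_fourier_apply 1 x, mul_one, abs_of_nonneg hρ0]
  have hzball : ∀ x, z x ∈ Metric.ball (0 : ℂ) 1 := by
    intro x
    rw [Metric.mem_ball, dist_zero_right, hznorm]
    exact hρ1
  -- geometric bound on coefficients
  obtain ⟨ρ', hρρ', hρ'1⟩ : ∃ ρ', ρ < ρ' ∧ ρ' < 1 :=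
    ⟨(1 + ρ) / 2, by constructor <;> linarith⟩
  have hρ'0 : 0 < ρ' := lt_of_le_of_lt hρ0 hρρ'
  have hρ'ball : (ρ' : ℂ) ∈ Metric.ball (0 : ℂ) 1 := by
    rw [Metric.mem_ball, dist_zero_right, Complex.norm_real, Real.norm_eq_abs,
      abs_of_nonneg hρ'0.le]
    exact hρ'1
  have hsum' : Summable fun n : ℕ => a n * (ρ' : ℂ) ^ n := (hs _ hρ'ball).summable
  have htend : Tendsto (fun n : ℕ => ‖a n * (ρ' : ℂ) ^ n‖) atTop (nhds 0) := by
    have := hsum'.tendsto_atTop_zero.norm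
    simpa using this
  obtain ⟨C, hC⟩ := htend.bddAbove_range
  have hCa : ∀ j : ℕ, ‖a j‖ * ρ' ^ j ≤ C := by
    intro j
    have := hC (Set.mem_range_self j)
    simpa [norm_mul, norm_pow, Complex.norm_real, Real.norm_eq_abs,
      abs_of_nonneg hρ'0.le] using this
  have hgeo : Summable fun j : ℕ => ‖a j‖ * ρ ^ j := by
    refine Summable.of_nonneg_of_le (fun j => by positivity) (fun j => ?_)
      (((summable_geometric_of_lt_one (by positivity)
        ((div_lt_one hρ'0).2 hρρ')).mul_left C))
    have hpow : ρ ^ j = ρ' ^ j * (ρ / ρ') ^ j := by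
      rw [← mul_pow]
      congr 1
      field_simp
    calc ‖a j‖ * ρ ^ j = ‖a j‖ * ρ' ^ j * (ρ / ρ') ^ j := by rw [hpow]; ring
      _ ≤ C * (ρ / ρ') ^ j := by
          apply mul_le_mul_of_nonneg_right (hCa j) (by positivity)
  -- the coefficient sequences
  set b : ℕ → ℂ := fun n => ∑ k ∈ Finset.range (N + 1), (if k ≤ n then a (n - k) else 0)
    with hbdef
  set c : ℕ → ℂ := fun n => b n * (ρ : ℂ) ^ n with hcdef
  set d : ℕ → ℂ := fun n => if n ≤ N then (ρ : ℂ) ^ n else 0 with hddef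
  set F : AddCircle T → ℂ := fun x => f (z x) * ∑ k ∈ Finset.range (N + 1), z x ^ k
    with hFdef
  set G : AddCircle T → ℂ := fun x => ∑ k ∈ Finset.range (N + 1), z x ^ k with hGdef
  -- summability of ‖c‖
  have hshift : ∀ k : ℕ, Summable (fun n : ℕ => if k ≤ n then ‖a (n - k)‖ * ρ ^ (n - k) else 0) := by
    intro k
    have hinj : Function.Injective (fun j : ℕ => j + k) := add_left_injective k
    rw [← Function.Injective.summable_iff hinj (fun x hx => ?_)]
    · have : ((fun n : ℕ => if k ≤ n then ‖a (n - k)‖ * ρ ^ (n - k) else 0) ∘ fun j => j + k)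
          = fun j : ℕ => ‖a j‖ * ρ ^ j := by
        funext j
        simp [Nat.add_sub_cancel]
      rw [this]
      exact hgeo
    · have hxk : ¬ k ≤ x := by
        intro h
        exact hx ⟨x - k, by show x - k + k = x; omega⟩
      simp [hxk]
  have hcb : ∀ n, ‖c n‖ ≤ ∑ k ∈ Finset.range (N + 1),
      (if k ≤ n then ‖a (n - k)‖ * ρ ^ (n - k) else 0) := by
    intro n
    have h1 : ‖c n‖ ≤ (∑ k ∈ Finset.range (N + 1), ‖(if k ≤ n then a (n - k) else 0)‖) * ρ ^ n := by
      rw [hcdef]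
      simp only
      rw [norm_mul, norm_pow, Complex.norm_real, Real.norm_eq_abs, abs_of_nonneg hρ0]
      exact mul_le_mul_of_nonneg_right (norm_sum_le _ _) (by positivity)
    rw [Finset.sum_mul] at h1
    refine h1.trans (Finset.sum_le_sum fun k _ => ?_)
    by_cases hk : k ≤ n
    · rw [if_pos hk, if_pos hk]
      exact mul_le_mul_of_nonneg_left
        (pow_le_pow_of_le_one hρ0 hρ1.le (by omega)) (norm_nonneg _)
    · rw [if_neg hk, if_neg hk]
      simp
  have hc : Summable fun n => ‖c n‖ :=
    Summable.of_nonneg_of_le (fun n => norm_nonneg _) hcb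
      (summable_sum fun k _ => hshift k)
  have hd : Summable fun n => ‖d n‖ := by
    apply summable_of_ne_finset_zero (s := Finset.range (N + 1))
    intro n hn
    rw [Finset.mem_range] at hn
    simp [hddef, if_neg (by omega : ¬ n ≤ N)]
  -- HasSum for F
  have hFsum : ∀ x, HasSum (fun n : ℕ => c n * fourier n x) (F x) := by
    intro x
    have h1 : ∀ k ∈ Finset.range (N + 1),
        HasSum (fun n : ℕ => if k ≤ n then a (n - k) * z x ^ n else 0)
          (z x ^ k * f (z x)) := by
      intro k _
      have h2 := (hs (z x) (hzball x)).mul_left (z x ^ k)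
      have hinj : Function.Injective (fun j : ℕ => j + k) := add_left_injective k
      rw [← Function.Injective.hasSum_iff hinj (fun m hm => ?_)]
      · have : ((fun n : ℕ => if k ≤ n then a (n - k) * z x ^ n else 0) ∘ fun j => j + k)
            = fun j : ℕ => z x ^ k * (a j * z x ^ j) := by
          funext j
          simp only [Function.comp_apply, if_pos (Nat.le_add_left k j), Nat.add_sub_cancel]
          rw [pow_add]
          ring
        rw [this]
        exact h2
      · have hmk : ¬ k ≤ m := by
          intro h
          exact hm ⟨m - k, by show m - k + k = m; omega⟩
        simp [hmk]
    have h3 := hasSum_sum h1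
    have h4 : (fun n : ℕ => ∑ k ∈ Finset.range (N + 1),
        (if k ≤ n then a (n - k) * z x ^ n else 0))
        = fun n : ℕ => c n * fourier n x := by
      funext n
      have h5 : ∀ k, (if k ≤ n then a (n - k) * z x ^ n else 0)
          = (if k ≤ n then a (n - k) else 0) * z x ^ n := by
        intro k
        split_ifs <;> simp
      simp_rw [h5, ← Finset.sum_mul]
      have h6 : z x ^ n = (ρ : ℂ) ^ n * fourier n x := by
        show ((ρ : ℂ) * fourier 1 x) ^ n = (ρ : ℂ) ^ n * fourier n x
        rw [mul_pow, fourier_natCast_pow]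
      show b n * z x ^ n = b n * (ρ : ℂ) ^ n * fourier n x
      rw [h6]
      ring
    rw [h4] at h3
    have h7 : F x = ∑ k ∈ Finset.range (N + 1), z x ^ k * f (z x) := by
      rw [hFdef]
      simp only
      rw [← Finset.sum_mul]
      ring
    rw [h7]
    exact h3
  -- HasSum for G
  have hGsum : ∀ x, HasSum (fun n : ℕ => d n * fourier n x) (G x) := by
    intro x
    have h1 : HasSum (fun n : ℕ => d n * fourier n x)
        (∑ n ∈ Finset.range (N + 1), d n * fourier n x) := by
      apply hasSum_sum_of_ne_finset_zero
      intro n hn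
      rw [Finset.mem_range] at hn
      simp [hddef, if_neg (by omega : ¬ n ≤ N)]
    have h2 : G x = ∑ n ∈ Finset.range (N + 1), d n * fourier n x := by
      rw [hGdef]
      simp only
      apply Finset.sum_congr rfl
      intro n hn
      rw [Finset.mem_range] at hn
      rw [hddef]
      simp only [if_pos (by omega : n ≤ N)]
      rw [hzdef]
      simp only
      rw [mul_pow, fourier_natCast_pow]
    rw [h2]
    exact h1
  -- Parseval both sides
  have hPF := parseval_of_hasSum c hc F hFsum
  have hPG := parseval_of_hasSum d hd G hGsum
  have hFcont : Continuous F := continuous_sum c hc F hFsum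
  have hGcont : Continuous G := continuous_sum d hd G hGsum
  have hint : (∫ x : AddCircle T, ‖F x‖ ^ 2 ∂haarAddCircle)
      ≤ ∫ x : AddCircle T, ‖G x‖ ^ 2 ∂haarAddCircle := by
    apply integral_mono
    · exact (hFcont.norm.pow 2).integrable_of_hasCompactSupport
        (HasCompactSupport.of_compactSpace _)
    · exact (hGcont.norm.pow 2).integrable_of_hasCompactSupport
        (HasCompactSupport.of_compactSpace _)
    · intro x
      have hFG : ‖F x‖ ≤ ‖G x‖ := by
        have hFGx : F x = f (z x) * G x := rfl
        rw [hFGx, norm_mul]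
        have hfz : ‖f (z x)‖ ≤ 1 := by
          exact hb _ (hzball x)
        calc ‖f (z x)‖ * ‖G x‖ ≤ 1 * ‖G x‖ :=
              mul_le_mul_of_nonneg_right hfz (norm_nonneg _)
          _ = ‖G x‖ := one_mul _
      exact pow_le_pow_left₀ (norm_nonneg _) hFG 2
  have key : (∑' n : ℕ, ‖c n‖ ^ 2) ≤ ∑' n : ℕ, ‖d n‖ ^ 2 := by
    rw [hPF, hPG]
    exact hint
  -- identify both tsums
  have hdsum : (∑' n : ℕ, ‖d n‖ ^ 2) = ∑ k ∈ Finset.range (N + 1), ρ ^ (2 * k) := by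
    rw [tsum_eq_sum (s := Finset.range (N + 1)) (fun n hn => by
      rw [Finset.mem_range] at hn
      simp [hddef, if_neg (by omega : ¬ n ≤ N)])]
    apply Finset.sum_congr rfl
    intro k hk
    rw [Finset.mem_range] at hk
    rw [hddef]
    simp only [if_pos (by omega : k ≤ N)]
    rw [norm_pow, Complex.norm_real, Real.norm_eq_abs, abs_of_nonneg hρ0, ← pow_mul,
      mul_comm k 2]
  have hbs : ∀ n ≤ N, b n = ∑ k ∈ Finset.range (n + 1), a k := by
    intro n hn
    rw [hbdef]
    simp only
    rw [← Finset.sum_subset (Finset.range_subset_range.2 (by omega : n + 1 ≤ N + 1))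
      (fun k _ hk => by
        rw [Finset.mem_range] at hk
        rw [if_neg (by omega : ¬ k ≤ n)])]
    have : ∀ k ∈ Finset.range (n + 1), (if k ≤ n then a (n - k) else 0) = a (n - k) := by
      intro k hk
      rw [Finset.mem_range] at hk
      rw [if_pos (by omega)]
    rw [Finset.sum_congr rfl this]
    have := Finset.sum_range_reflect (fun j => a j) (n + 1)
    simpa using this
  calc ∑ n ∈ Finset.range (N + 1), ‖∑ k ∈ Finset.range (n + 1), a k‖ ^ 2 * ρ ^ (2 * n)
      = ∑ n ∈ Finset.range (N + 1), ‖c n‖ ^ 2 := by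
        apply Finset.sum_congr rfl
        intro n hn
        rw [Finset.mem_range] at hn
        rw [hcdef]
        simp only
        rw [norm_mul, norm_pow, Complex.norm_real, Real.norm_eq_abs, abs_of_nonneg hρ0,
          hbs n (by omega), mul_pow, ← pow_mul, mul_comm n 2]
    _ ≤ ∑' n : ℕ, ‖c n‖ ^ 2 :=
        (summable_norm_sq hc).sum_le_tsum _ (fun n _ => sq_nonneg _)
    _ ≤ ∑' n : ℕ, ‖d n‖ ^ 2 := key
    _ = ∑ k ∈ Finset.range (N + 1), ρ ^ (2 * k) := hdsum


end CesaroAux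
end

open MeasureTheory Filter Finset

section Main

lemma step_sq (f : ℂ → ℂ) (a : ℕ → ℂ)
    (hb : ∀ z ∈ Metric.ball (0 : ℂ) 1, ‖f z‖ ≤ 1)
    (hs : ∀ z ∈ Metric.ball (0 : ℂ) 1, HasSum (fun n : ℕ => a n * z ^ n) (f z))
    (N : ℕ) :
    ∑ n ∈ Finset.range (N + 1), ‖∑ k ∈ Finset.range (n + 1), a k‖ ^ 2 ≤ (N : ℝ) + 1 := by
  have hlim1 : Tendsto (fun ρ : ℝ => ∑ n ∈ Finset.range (N + 1),
      ‖∑ k ∈ Finset.range (n + 1), a k‖ ^ 2 * ρ ^ (2 * n)) (nhdsWithin 1 (Set.Iio 1))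
      (nhds (∑ n ∈ Finset.range (N + 1), ‖∑ k ∈ Finset.range (n + 1), a k‖ ^ 2)) := by
    have hcont : Continuous (fun ρ : ℝ => ∑ n ∈ Finset.range (N + 1),
        ‖∑ k ∈ Finset.range (n + 1), a k‖ ^ 2 * ρ ^ (2 * n)) := by
      continuity
    have h2 := (hcont.tendsto 1).mono_left
      (nhdsWithin_le_nhds (s := Set.Iio (1:ℝ)))
    simpa using h2
  have hlim2 : Tendsto (fun ρ : ℝ => ∑ k ∈ Finset.range (N + 1), ρ ^ (2 * k))
      (nhdsWithin 1 (Set.Iio 1)) (nhds ((N : ℝ) + 1)) := by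
    have hcont : Continuous (fun ρ : ℝ => ∑ k ∈ Finset.range (N + 1), ρ ^ (2 * k)) := by
      continuity
    have h2 := (hcont.tendsto 1).mono_left
      (nhdsWithin_le_nhds (s := Set.Iio (1:ℝ)))
    have h3 : ∑ k ∈ Finset.range (N + 1), (1 : ℝ) ^ (2 * k) = (N : ℝ) + 1 := by
      simp
    rw [h3] at h2
    exact h2
  have hev : ∀ᶠ ρ in nhdsWithin (1 : ℝ) (Set.Iio 1),
      (∑ n ∈ Finset.range (N + 1), ‖∑ k ∈ Finset.range (n + 1), a k‖ ^ 2 * ρ ^ (2 * n))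
        ≤ ∑ k ∈ Finset.range (N + 1), ρ ^ (2 * k) := by
    have hmem : Set.Ioo (0 : ℝ) 1 ∈ nhdsWithin (1 : ℝ) (Set.Iio 1) :=
      Ioo_mem_nhdsLT_of_mem (by constructor <;> norm_num)
    filter_upwards [hmem] with ρ hρ
    exact CesaroAux.step_rho f a hb hs ρ hρ.1.le hρ.2 N
  exact le_of_tendsto_of_tendsto hlim1 hlim2 hev

lemma step_lin (f : ℂ → ℂ) (a : ℕ → ℂ)
    (hb : ∀ z ∈ Metric.ball (0 : ℂ) 1, ‖f z‖ ≤ 1)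
    (hs : ∀ z ∈ Metric.ball (0 : ℂ) 1, HasSum (fun n : ℕ => a n * z ^ n) (f z))
    (N : ℕ) :
    ∑ n ∈ Finset.range (N + 1), ‖∑ k ∈ Finset.range (n + 1), a k‖ ≤ (N : ℝ) + 1 := by
  have hcs := Finset.sum_mul_sq_le_sq_mul_sq (Finset.range (N + 1))
    (fun n => ‖∑ k ∈ Finset.range (n + 1), a k‖) (fun _ => (1 : ℝ))
  simp only [mul_one, one_pow] at hcs
  have h1 : ∑ _i ∈ Finset.range (N + 1), (1 : ℝ) = (N : ℝ) + 1 := by simp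
  rw [h1] at hcs
  have h2 := step_sq f a hb hs N
  have h3 : (0 : ℝ) ≤ ∑ n ∈ Finset.range (N + 1), ‖∑ k ∈ Finset.range (n + 1), a k‖ :=
    Finset.sum_nonneg fun n _ => norm_nonneg _
  nlinarith [h2, h3, hcs, Nat.cast_nonneg (α := ℝ) N]

/-- The modulus bound for the Cesàro operator sum:
`Σ_{n≥0} (1/(n+1)) |Σ_{k=0}^n a_k| r^n ≤ (1/r) log(1/(1-r))` for `f ∈ B(𝔻)`. -/
theorem cesaro_modulus_bound (f : ℂ → ℂ) (a : ℕ → ℂ)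
    (hf : AnalyticOn ℂ f (Metric.ball (0 : ℂ) 1))
    (hb : ∀ z ∈ Metric.ball (0 : ℂ) 1, ‖f z‖ ≤ 1)
    (hs : ∀ z ∈ Metric.ball (0 : ℂ) 1, HasSum (fun n : ℕ => a n * z ^ n) (f z)) :
    ∀ r : ℝ, 0 < r → r < 1 →
      (∑' n : ℕ, (1 / ((n : ℝ) + 1)) *
          ‖∑ k ∈ Finset.range (n + 1), a k‖ * r ^ n)
        ≤ (1 / r) * Real.log (1 / (1 - r)) := by
  intro r hr0 hr1
  set u : ℕ → ℝ := fun n => ‖∑ k ∈ Finset.range (n + 1), a k‖ with hudef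
  set w : ℕ → ℝ := fun n => (1 / ((n : ℝ) + 1)) * r ^ n with hwdef
  have hu0 : ∀ n, 0 ≤ u n := fun n => norm_nonneg _
  have hw0 : ∀ n, 0 ≤ w n := by
    intro n
    rw [hwdef]
    positivity
  have hwa : ∀ n, w (n + 1) ≤ w n := by
    intro n
    rw [hwdef]
    simp only
    apply mul_le_mul
    · apply one_div_le_one_div_of_le (by positivity)
      push_cast
      linarith
    · exact pow_le_pow_of_le_one hr0.le hr1.le (by omega)
    · positivity
    · positivity
  have hU : ∀ M : ℕ, ∑ n ∈ Finset.range M, u n ≤ (M : ℝ) := by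
    intro M
    cases M with
    | zero => simp
    | succ K =>
        have := step_lin f a hb hs K
        rw [hudef]
        push_cast
        exact this
  have hun : ∀ n, u n ≤ (n : ℝ) + 1 := by
    intro n
    have h1 : u n ≤ ∑ m ∈ Finset.range (n + 1), u m :=
      Finset.single_le_sum (fun m _ => hu0 m) (Finset.self_mem_range_succ n)
    have h2 := hU (n + 1)
    push_cast at h2
    linarith
  have hsw : Summable w := by
    refine Summable.of_nonneg_of_le hw0 (fun n => ?_)
      (summable_geometric_of_lt_one hr0.le hr1)
    rw [hwdef]
    simp only
    calc 1 / ((n : ℝ) + 1) * r ^ n ≤ 1 * r ^ n := by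
          apply mul_le_mul_of_nonneg_right _ (by positivity)
          rw [div_le_one (by positivity)]
          linarith [Nat.cast_nonneg (α := ℝ) n]
      _ = r ^ n := one_mul _
  have hsu : Summable fun n => u n * w n := by
    refine Summable.of_nonneg_of_le (fun n => mul_nonneg (hu0 n) (hw0 n)) (fun n => ?_)
      (summable_geometric_of_lt_one hr0.le hr1)
    rw [hwdef]
    simp only
    calc u n * (1 / ((n : ℝ) + 1) * r ^ n)
        ≤ ((n : ℝ) + 1) * (1 / ((n : ℝ) + 1) * r ^ n) := by
          apply mul_le_mul_of_nonneg_right (hun n) (by positivity)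
      _ = r ^ n := by
          field_simp
  -- compare tsums via partial sums
  have hcomp : (∑' n, u n * w n) ≤ ∑' n, w n := by
    have h1 : Tendsto (fun M => ∑ n ∈ Finset.range M, u n * w n) atTop
        (nhds (∑' n, u n * w n)) := hsu.hasSum.tendsto_sum_nat
    have h2 : Tendsto (fun M => ∑ n ∈ Finset.range M, w n) atTop
        (nhds (∑' n, w n)) := hsw.hasSum.tendsto_sum_nat
    exact le_of_tendsto_of_tendsto h1 h2
      (Filter.Eventually.of_forall (CesaroAux.abel_aux u w hu0 hw0 hwa hU))
  -- compute ∑' w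
  have hlog : HasSum (fun n : ℕ => r ^ (n + 1) / ((n : ℝ) + 1)) (-Real.log (1 - r)) :=
    Real.hasSum_pow_div_log_of_abs_lt_one (by rw [abs_of_nonneg hr0.le]; exact hr1)
  have hlog2 : HasSum (fun n : ℕ => r * w n) (-Real.log (1 - r)) := by
    have heq : (fun n : ℕ => r * w n) = fun n : ℕ => r ^ (n + 1) / ((n : ℝ) + 1) := by
      funext n
      rw [hwdef]
      simp only
      rw [pow_succ]
      field_simp
    rw [heq]
    exact hlog
  have hlog3 : HasSum w (r⁻¹ * (-Real.log (1 - r))) := by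
    have := hlog2.mul_left r⁻¹
    have heq : (fun n : ℕ => r⁻¹ * (r * w n)) = w := by
      funext n
      rw [← mul_assoc, inv_mul_cancel₀ (ne_of_gt hr0), one_mul]
    rwa [heq] at this
  have hws : (∑' n, w n) = (1 / r) * Real.log (1 / (1 - r)) := by
    rw [hlog3.tsum_eq, one_div, one_div, Real.log_inv]
  have heqgoal : (∑' n : ℕ, (1 / ((n : ℝ) + 1)) *
      ‖∑ k ∈ Finset.range (n + 1), a k‖ * r ^ n) = ∑' n, u n * w n := by
    apply tsum_congr
    intro n
    rw [hudef, hwdef]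
    beta_reduce
    ring
  rw [heqgoal, ← hws]
  exact hcomp

end Main
end
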